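/- arXiv:2409.07873 — 6 statements merged into one kernel-verified Lean document; each statement's English description precedes it below -/
import Mathlib

section
/- Let d ≥ 1 and let D ⊆ ℝ^d be a nonempty bounded open set whose topological boundary has Lebesgue measure zero. Let s_1, …, s_N ∈ D be pairwise distinct seed points and let ν_1, …, ν_N be real numbers with ν_i > 0 for every i and Σ_{i=1}^N ν_i < vol(D). Then there exists a weight vector ψ ∈ ℝ^N such that vol(V_i(s,ψ)) = ν_i for every i = 1, …, N, and consequently vol(V_0(s,ψ)) = vol(D) − Σ_{i=1}^N ν_i. -/
open MeasureTheory

noncomputable section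

/-- The Laguerre cell `Lag_i(s, ψ)` of the diagram of the domain `D` generated by the
seed points `s` and weights `ψ`. -/
def Lag {d N : ℕ} (D : Set (EuclideanSpace ℝ (Fin d)))
    (s : Fin N → EuclideanSpace ℝ (Fin d)) (ψ : Fin N → ℝ) (i : Fin N) :
    Set (EuclideanSpace ℝ (Fin d)) :=
  {x | x ∈ closure D ∧ ∀ j : Fin N, j ≠ i → ‖x - s i‖ ^ 2 - ψ i ≤ ‖x - s j‖ ^ 2 - ψ j}

/-- The modified Laguerre cell `V_i(s, ψ)`: the Laguerre cell intersected with the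
closed ball of center `s i` and radius `√(ψ i)`. -/
def Vcell {d N : ℕ} (D : Set (EuclideanSpace ℝ (Fin d)))
    (s : Fin N → EuclideanSpace ℝ (Fin d)) (ψ : Fin N → ℝ) (i : Fin N) :
    Set (EuclideanSpace ℝ (Fin d)) :=
  Lag D s ψ i ∩ {x | ‖x - s i‖ ^ 2 ≤ ψ i}

/-- The void cell `V_0(s, ψ)`. -/
def Vvoid {d N : ℕ} (D : Set (EuclideanSpace ℝ (Fin d)))
    (s : Fin N → EuclideanSpace ℝ (Fin d)) (ψ : Fin N → ℝ) :
    Set (EuclideanSpace ℝ (Fin d)) :=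
  {x | x ∈ closure D ∧ ∀ i : Fin N, 0 ≤ ‖x - s i‖ ^ 2 - ψ i}

/-- The Kantorovich functional `K(s, ν, ψ)`. -/
def Kfun {d N : ℕ} (D : Set (EuclideanSpace ℝ (Fin d)))
    (s : Fin N → EuclideanSpace ℝ (Fin d)) (ν ψ : Fin N → ℝ) : ℝ :=
  (∑ i, ∫ x in Vcell D s ψ i, (‖x - s i‖ ^ 2 - ψ i)) + ∑ i, ν i * ψ i

/-! ### Auxiliary machinery -/

open Finset Filter Topology

section Aux

variable {d N : ℕ}

/-- Spheres (in the `‖·‖²` form) are Lebesgue-null in dimension at least 1. -/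
lemma null_sphere_sq (hd : 1 ≤ d) (a : EuclideanSpace ℝ (Fin d)) (r : ℝ) :
    volume {x : EuclideanSpace ℝ (Fin d) | ‖x - a‖ ^ 2 = r} = 0 := by
  haveI : Nontrivial (EuclideanSpace ℝ (Fin d)) := by
    apply Module.nontrivial_of_finrank_pos (R := ℝ)
    rw [finrank_euclideanSpace_fin]; omega
  rcases lt_or_ge r 0 with hr | hr
  · convert measure_empty (μ := volume)
    ext x; simp only [Set.mem_setOf_eq, Set.mem_empty_iff_false, iff_false]
    intro h; nlinarith [sq_nonneg ‖x - a‖, norm_nonneg (x - a)]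
  · have : {x : EuclideanSpace ℝ (Fin d) | ‖x - a‖ ^ 2 = r} = Metric.sphere a (Real.sqrt r) := by
      ext x
      simp only [Set.mem_setOf_eq, Metric.mem_sphere, dist_eq_norm]
      constructor
      · intro h; rw [← h, Real.sqrt_sq (norm_nonneg _)]
      · intro h; rw [h, Real.sq_sqrt hr]
    rw [this]
    exact Measure.addHaar_sphere volume a _

/-- Bisectors of distinct points are Lebesgue-null. -/
lemma null_bisector (a b : EuclideanSpace ℝ (Fin d)) (hab : a ≠ b) (r : ℝ) :
    volume {x : EuclideanSpace ℝ (Fin d) | ‖x - a‖ ^ 2 - ‖x - b‖ ^ 2 = r} = 0 := by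
  set v : EuclideanSpace ℝ (Fin d) := b - a with hv
  have hv0 : v ≠ 0 := sub_ne_zero.mpr (Ne.symm hab)
  set c : ℝ := (r - ‖a‖ ^ 2 + ‖b‖ ^ 2) / 2 with hc
  have hset : {x : EuclideanSpace ℝ (Fin d) | ‖x - a‖ ^ 2 - ‖x - b‖ ^ 2 = r}
      = {x : EuclideanSpace ℝ (Fin d) | inner ℝ v x = c} := by
    ext x
    simp only [Set.mem_setOf_eq]
    have h1 : ‖x - a‖ ^ 2 = ‖x‖ ^ 2 - 2 * inner ℝ x a + ‖a‖ ^ 2 := norm_sub_sq_real x a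
    have h2 : ‖x - b‖ ^ 2 = ‖x‖ ^ 2 - 2 * inner ℝ x b + ‖b‖ ^ 2 := norm_sub_sq_real x b
    have h3 : (inner ℝ v x : ℝ) = inner ℝ x b - inner ℝ x a := by
      rw [hv, inner_sub_left, real_inner_comm b x, real_inner_comm a x]
    rw [h1, h2, h3, hc]
    constructor <;> intro h <;> linarith
  rw [hset]
  set x0 : EuclideanSpace ℝ (Fin d) := (c / ‖v‖ ^ 2) • v with hx0
  have hvx0 : (inner ℝ v x0 : ℝ) = c := by
    rw [hx0, real_inner_smul_right, real_inner_self_eq_norm_sq]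
    field_simp [norm_ne_zero_iff.mpr hv0]
  set K : Submodule ℝ (EuclideanSpace ℝ (Fin d)) := LinearMap.ker ((innerSL ℝ v : EuclideanSpace ℝ (Fin d) →L[ℝ] ℝ) :
    EuclideanSpace ℝ (Fin d) →ₗ[ℝ] ℝ) with hK
  have hpre : (fun y => x0 + y) ⁻¹' {x : EuclideanSpace ℝ (Fin d) | inner ℝ v x = c}
      = (K : Set _) := by
    ext y
    simp only [Set.mem_preimage, Set.mem_setOf_eq, hK, SetLike.mem_coe, LinearMap.mem_ker,
      ContinuousLinearMap.coe_coe, innerSL_apply_apply]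
    rw [inner_add_right, hvx0]
    constructor <;> intro h <;> linarith
  have hKne : K ≠ ⊤ := by
    intro h
    have hvK : v ∈ K := by rw [h]; trivial
    rw [hK] at hvK
    simp only [LinearMap.mem_ker, ContinuousLinearMap.coe_coe, innerSL_apply_apply] at hvK
    exact hv0 (inner_self_eq_zero.mp hvK)
  have hK0 := Measure.addHaar_submodule (volume : Measure (EuclideanSpace ℝ (Fin d))) K hKne
  calc volume {x : EuclideanSpace ℝ (Fin d) | inner ℝ v x = c}
      = volume ((fun y => x0 + y) ⁻¹' {x : EuclideanSpace ℝ (Fin d) | inner ℝ v x = c}) :=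
        (measure_preimage_add volume x0 _).symm
    _ = 0 := by rw [hpre]; exact hK0

/-- The integrand `min(0, min_i (‖x - s i‖² - ψ i))`. -/
def phi (hne : (Finset.univ : Finset (Fin N)).Nonempty)
    (s : Fin N → EuclideanSpace ℝ (Fin d)) (ψ : Fin N → ℝ)
    (x : EuclideanSpace ℝ (Fin d)) : ℝ :=
  min 0 (Finset.univ.inf' hne fun i => ‖x - s i‖ ^ 2 - ψ i)

lemma phi_nonpos (hne : (Finset.univ : Finset (Fin N)).Nonempty)
    (s : Fin N → EuclideanSpace ℝ (Fin d)) (ψ : Fin N → ℝ) (x : EuclideanSpace ℝ (Fin d)) :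
    phi hne s ψ x ≤ 0 := min_le_left _ _

lemma phi_le (hne : (Finset.univ : Finset (Fin N)).Nonempty)
    (s : Fin N → EuclideanSpace ℝ (Fin d)) (ψ : Fin N → ℝ) (x : EuclideanSpace ℝ (Fin d))
    (i : Fin N) : phi hne s ψ x ≤ ‖x - s i‖ ^ 2 - ψ i :=
  le_trans (min_le_right _ _) (Finset.inf'_le _ (Finset.mem_univ i))

lemma le_phi (hne : (Finset.univ : Finset (Fin N)).Nonempty)
    {s : Fin N → EuclideanSpace ℝ (Fin d)} {ψ : Fin N → ℝ} {x : EuclideanSpace ℝ (Fin d)}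
    {a : ℝ} (h0 : a ≤ 0) (h : ∀ i, a ≤ ‖x - s i‖ ^ 2 - ψ i) : a ≤ phi hne s ψ x :=
  le_min h0 (Finset.le_inf' hne _ fun i _ => h i)

lemma phi_cases (hne : (Finset.univ : Finset (Fin N)).Nonempty)
    (s : Fin N → EuclideanSpace ℝ (Fin d)) (ψ : Fin N → ℝ) (x : EuclideanSpace ℝ (Fin d)) :
    phi hne s ψ x = 0 ∨ ∃ i, phi hne s ψ x = ‖x - s i‖ ^ 2 - ψ i := by
  rcases min_cases (0:ℝ) (Finset.univ.inf' hne fun i => ‖x - s i‖ ^ 2 - ψ i) with h | h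
  · exact Or.inl h.1
  · obtain ⟨i, _, hi⟩ := Finset.exists_mem_eq_inf' hne fun i => ‖x - s i‖ ^ 2 - ψ i
    exact Or.inr ⟨i, h.1.trans hi⟩

lemma phi_continuous (hne : (Finset.univ : Finset (Fin N)).Nonempty)
    (s : Fin N → EuclideanSpace ℝ (Fin d)) (ψ : Fin N → ℝ) :
    Continuous (phi hne s ψ) := by
  rw [continuous_iff_continuousAt]
  intro x
  have h2 : ContinuousAt (fun y : EuclideanSpace ℝ (Fin d) =>
      Finset.univ.inf' hne fun i => ‖y - s i‖ ^ 2 - ψ i) x := by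
    apply ContinuousAt.finset_inf'_apply hne
    intro i _
    exact (((continuous_id.sub continuous_const).norm.pow 2).sub continuous_const).continuousAt
  exact continuousAt_const.min h2

lemma phi_dist (hne : (Finset.univ : Finset (Fin N)).Nonempty)
    (s : Fin N → EuclideanSpace ℝ (Fin d)) (ψ ψ' : Fin N → ℝ) (x : EuclideanSpace ℝ (Fin d)) :
    |phi hne s ψ x - phi hne s ψ' x| ≤ dist ψ ψ' := by
  have key : ∀ χ χ' : Fin N → ℝ, phi hne s χ x - phi hne s χ' x ≤ dist χ χ' := by
    intro χ χ'
    rcases phi_cases hne s χ' x with h | ⟨i, h⟩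
    · rw [h, sub_zero]
      exact (phi_nonpos hne s χ x).trans dist_nonneg
    · have h1 : phi hne s χ x ≤ ‖x - s i‖ ^ 2 - χ i := phi_le hne s χ x i
      have h2 : |χ i - χ' i| ≤ dist χ χ' := by
        rw [← Real.dist_eq]
        exact dist_le_pi_dist χ χ' i
      rw [h]
      have := abs_le.mp h2
      linarith
  rw [abs_sub_le_iff]
  exact ⟨key ψ ψ', by simpa [dist_comm] using key ψ' ψ⟩

/-- The concave functional whose maximizers give the desired weights. -/
def Gfun (hne : (Finset.univ : Finset (Fin N)).Nonempty)
    (D : Set (EuclideanSpace ℝ (Fin d))) (s : Fin N → EuclideanSpace ℝ (Fin d))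
    (ν : Fin N → ℝ) (ψ : Fin N → ℝ) : ℝ :=
  (∫ x in closure D, phi hne s ψ x) + ∑ i, ν i * ψ i

lemma phi_integrableOn (hne : (Finset.univ : Finset (Fin N)).Nonempty)
    (D : Set (EuclideanSpace ℝ (Fin d))) (hDb : Bornology.IsBounded D)
    (s : Fin N → EuclideanSpace ℝ (Fin d)) (ψ : Fin N → ℝ) :
    IntegrableOn (phi hne s ψ) (closure D) :=
  (phi_continuous hne s ψ).continuousOn.integrableOn_compact hDb.isCompact_closure

lemma Gfun_continuous (hne : (Finset.univ : Finset (Fin N)).Nonempty)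
    (D : Set (EuclideanSpace ℝ (Fin d))) (hDb : Bornology.IsBounded D)
    (s : Fin N → EuclideanSpace ℝ (Fin d)) (ν : Fin N → ℝ) :
    Continuous (Gfun hne D s ν) := by
  have hfin : volume (closure D) < ⊤ := hDb.isCompact_closure.measure_lt_top
  set A : ℝ := (volume (closure D)).toReal with hA
  have hA0 : 0 ≤ A := ENNReal.toReal_nonneg
  have h1 : Continuous fun ψ : Fin N → ℝ => ∫ x in closure D, phi hne s ψ x := by
    have : LipschitzWith (Real.toNNReal A)
        fun ψ : Fin N → ℝ => ∫ x in closure D, phi hne s ψ x := by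
      rw [lipschitzWith_iff_dist_le_mul]
      intro ψ ψ'
      rw [Real.dist_eq,
        ← integral_sub (phi_integrableOn hne D hDb s ψ) (phi_integrableOn hne D hDb s ψ')]
      have := norm_setIntegral_le_of_norm_le_const (μ := volume) hfin
        (f := fun x => phi hne s ψ x - phi hne s ψ' x) (C := dist ψ ψ')
        (fun x _ => by rw [Real.norm_eq_abs]; exact phi_dist hne s ψ ψ' x)
      rw [Real.norm_eq_abs] at this
      calc |∫ x in closure D, (phi hne s ψ x - phi hne s ψ' x)| ≤ dist ψ ψ' * A := this
        _ ≤ Real.toNNReal A * dist ψ ψ' := by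
            rw [Real.coe_toNNReal A hA0]; rw [mul_comm]
    exact this.continuous
  exact h1.add (by continuity)

lemma exists_max (G : (Fin N → ℝ) → ℝ) (hG : Continuous G) (R' : ℝ) (hR' : 0 ≤ R')
    (hcoer : ∀ ψ, G 0 ≤ G ψ → ψ ∈ Metric.closedBall (0 : Fin N → ℝ) R') :
    ∃ ψ, ∀ ψ', G ψ' ≤ G ψ := by
  obtain ⟨ψ, hmem, hmax⟩ := (isCompact_closedBall (0 : Fin N → ℝ) R').exists_isMaxOn
    ⟨0, Metric.mem_closedBall_self hR'⟩ hG.continuousOn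
  refine ⟨ψ, fun ψ' => ?_⟩
  by_cases h : ψ' ∈ Metric.closedBall (0 : Fin N → ℝ) R'
  · exact hmax h
  · have h0 : G ψ' < G 0 := by
      by_contra hc
      exact h (hcoer ψ' (le_of_not_gt hc))
    exact h0.le.trans (hmax (Metric.mem_closedBall_self hR'))

lemma Gfun_upper (hne : (Finset.univ : Finset (Fin N)).Nonempty)
    (D : Set (EuclideanSpace ℝ (Fin d))) (hDb : Bornology.IsBounded D)
    (s : Fin N → EuclideanSpace ℝ (Fin d)) (ν : Fin N → ℝ) (hν : ∀ i, 0 < ν i)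
    (R2 : ℝ) (hR2 : ∀ x ∈ closure D, ∀ i, ‖x - s i‖ ^ 2 ≤ R2) (ψ : Fin N → ℝ) :
    Gfun hne D s ν ψ ≤ (volume (closure D)).toReal * min 0 (R2 - univ.sup' hne ψ)
      + ((∑ i, ν i) * univ.sup' hne ψ
         + (univ.inf' hne ν) * (univ.inf' hne ψ - univ.sup' hne ψ)) := by
  set M := univ.sup' hne ψ with hM
  set m := univ.inf' hne ψ with hm
  set A := (volume (closure D)).toReal with hA
  have part1 : (∫ x in closure D, phi hne s ψ x) ≤ A * min 0 (R2 - M) := by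
    obtain ⟨iM, _, hiM⟩ := Finset.exists_mem_eq_sup' hne ψ
    have hb : ∀ x ∈ closure D, phi hne s ψ x ≤ min 0 (R2 - M) := by
      intro x hx
      refine le_min (phi_nonpos hne s ψ x) ?_
      calc phi hne s ψ x ≤ ‖x - s iM‖ ^ 2 - ψ iM := phi_le hne s ψ x iM
        _ ≤ R2 - M := by have := hR2 x hx iM; rw [hM, hiM]; linarith
    calc (∫ x in closure D, phi hne s ψ x)
        ≤ ∫ _x in closure D, min 0 (R2 - M) := by
          apply setIntegral_mono_on (phi_integrableOn hne D hDb s ψ)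
            ((integrableOn_const_iff).mpr (Or.inr hDb.isCompact_closure.measure_lt_top))
            isClosed_closure.measurableSet hb
      _ = A * min 0 (R2 - M) := by rw [setIntegral_const, smul_eq_mul]; rfl
  have part2 : ∑ i, ν i * ψ i ≤ (∑ i, ν i) * M + (univ.inf' hne ν) * (m - M) := by
    obtain ⟨i0, hi0mem, hi0⟩ := Finset.exists_mem_eq_inf' hne ψ
    have hsplit : ∑ i, ν i * ψ i = ν i0 * ψ i0 + ∑ i ∈ univ.erase i0, ν i * ψ i :=
      (Finset.add_sum_erase _ _ hi0mem).symm
    have hrest : ∑ i ∈ univ.erase i0, ν i * ψ i ≤ ∑ i ∈ univ.erase i0, ν i * M := by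
      apply Finset.sum_le_sum
      intro i _
      exact mul_le_mul_of_nonneg_left (Finset.le_sup' ψ (Finset.mem_univ i)) (hν i).le
    have hsum_erase : ∑ i ∈ univ.erase i0, ν i * M = ((∑ i, ν i) - ν i0) * M := by
      rw [← Finset.sum_mul, Finset.sum_erase_eq_sub hi0mem]
    have hνi0 : univ.inf' hne ν ≤ ν i0 := Finset.inf'_le _ hi0mem
    have hmM : m - M ≤ 0 := by
      obtain ⟨k, hk⟩ := hne
      have : m ≤ M := le_trans (Finset.inf'_le ψ hk) (Finset.le_sup' ψ hk)
      linarith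
    have hlast : ν i0 * (m - M) ≤ (univ.inf' hne ν) * (m - M) :=
      mul_le_mul_of_nonpos_right hνi0 hmM
    rw [hsplit, ← hi0]
    nlinarith [hrest, hsum_erase]
  have hGeq : Gfun hne D s ν ψ = (∫ x in closure D, phi hne s ψ x) + ∑ i, ν i * ψ i := rfl
  linarith

lemma coercive_bound (hne : (Finset.univ : Finset (Fin N)).Nonempty)
    (A S ε R2 K0 : ℝ) (hSA : S < A) (hS : 0 < S) (hε : 0 < ε) (hR2 : 0 ≤ R2)
    (ψ : Fin N → ℝ)
    (h : K0 ≤ A * min 0 (R2 - univ.sup' hne ψ)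
      + (S * univ.sup' hne ψ + ε * (univ.inf' hne ψ - univ.sup' hne ψ))) :
    ∀ i, |ψ i| ≤ max (max (max R2 ((A * R2 - K0) / (A - S)))
      (-(min 0 (K0 / S) - (max (A * R2 - K0) (S * R2 - K0)) / ε))) 0 := by
  set u := univ.sup' hne ψ with hu
  set v := univ.inf' hne ψ with hv
  set Umax := max R2 ((A * R2 - K0) / (A - S)) with hUmax
  set Q := max (A * R2 - K0) (S * R2 - K0) with hQ
  set Vmin := min 0 (K0 / S) - Q / ε with hVmin
  have hvu : v ≤ u := by
    obtain ⟨k, hk⟩ := hne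
    exact le_trans (Finset.inf'_le ψ hk) (Finset.le_sup' ψ hk)
  have hεvu : ε * (v - u) ≤ 0 := mul_nonpos_of_nonneg_of_nonpos hε.le (by linarith)
  have hAS : 0 < A - S := by linarith
  have claims : u ≤ Umax ∧ Vmin ≤ v := by
    rcases le_or_gt R2 u with hRu | hRu
    · have hmin : min 0 (R2 - u) = R2 - u := min_eq_right (by linarith)
      rw [hmin] at h
      have h1 : (A - S) * u ≤ A * R2 - K0 := by nlinarith
      have hu1 : u ≤ (A * R2 - K0) / (A - S) := (le_div_iff₀ hAS).mpr (by linarith)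
      have hu0 : 0 ≤ u := le_trans hR2 hRu
      have h2 : ε * (u - v) ≤ A * R2 - K0 := by nlinarith
      have h3 : u - v ≤ Q / ε := (le_div_iff₀ hε).mpr
        (by rw [hQ]; calc (u - v) * ε = ε * (u - v) := by ring
              _ ≤ A * R2 - K0 := h2
              _ ≤ max (A * R2 - K0) (S * R2 - K0) := le_max_left _ _)
      constructor
      · exact le_trans hu1 (le_max_right _ _)
      · have : min 0 (K0 / S) ≤ u := le_trans (min_le_left _ _) hu0
        rw [hVmin]; linarith
    · have hmin : A * min 0 (R2 - u) ≤ 0 :=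
        mul_nonpos_of_nonneg_of_nonpos (by linarith) (min_le_left _ _)
      have h1 : K0 ≤ S * u := by nlinarith
      have hu1 : K0 / S ≤ u := (div_le_iff₀ hS).mpr (by linarith)
      have h2 : ε * (u - v) ≤ S * R2 - K0 := by nlinarith
      have h3 : u - v ≤ Q / ε := (le_div_iff₀ hε).mpr
        (by rw [hQ]; calc (u - v) * ε = ε * (u - v) := by ring
              _ ≤ S * R2 - K0 := h2
              _ ≤ max (A * R2 - K0) (S * R2 - K0) := le_max_right _ _)
      constructor
      · exact le_trans hRu.le (le_max_left _ _)
      · have : min 0 (K0 / S) ≤ u := le_trans (min_le_right _ _) hu1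
        rw [hVmin]; linarith
  intro i
  have hiu : ψ i ≤ u := Finset.le_sup' ψ (Finset.mem_univ i)
  have hiv : v ≤ ψ i := Finset.inf'_le ψ (Finset.mem_univ i)
  rw [abs_le]
  constructor
  · have h1 : -(max (max Umax (-Vmin)) 0) ≤ -(-Vmin) := by
      have : -Vmin ≤ max (max Umax (-Vmin)) 0 := le_trans (le_max_right _ _) (le_max_left _ _)
      linarith
    simp only [neg_neg] at h1
    linarith [claims.2]
  · have h1 : Umax ≤ max (max Umax (-Vmin)) 0 := le_trans (le_max_left _ _) (le_max_left _ _)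
    linarith [claims.1]

lemma contSq (a : EuclideanSpace ℝ (Fin d)) :
    Continuous fun x : EuclideanSpace ℝ (Fin d) => ‖x - a‖ ^ 2 :=
  (continuous_id.sub continuous_const).norm.pow 2

lemma isClosed_Vcell (D : Set (EuclideanSpace ℝ (Fin d)))
    (s : Fin N → EuclideanSpace ℝ (Fin d)) (ψ : Fin N → ℝ) (i : Fin N) :
    IsClosed (Vcell D s ψ i) := by
  have h1 : Vcell D s ψ i = (closure D ∩ ⋂ j : Fin N, ⋂ _ : j ≠ i,
      {x | ‖x - s i‖ ^ 2 - ψ i ≤ ‖x - s j‖ ^ 2 - ψ j}) ∩ {x | ‖x - s i‖ ^ 2 ≤ ψ i} := by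
    ext x; simp [Vcell, Lag, Set.mem_iInter, and_assoc]
  rw [h1]
  refine ((isClosed_closure.inter (isClosed_iInter fun j => isClosed_iInter fun _ => ?_)).inter ?_)
  · exact isClosed_le ((contSq (s i)).sub continuous_const) ((contSq (s j)).sub continuous_const)
  · exact isClosed_le (contSq (s i)) continuous_const

lemma isClosed_Vvoid (D : Set (EuclideanSpace ℝ (Fin d)))
    (s : Fin N → EuclideanSpace ℝ (Fin d)) (ψ : Fin N → ℝ) :
    IsClosed (Vvoid D s ψ) := by
  have h1 : Vvoid D s ψ = closure D ∩ ⋂ i : Fin N, {x | 0 ≤ ‖x - s i‖ ^ 2 - ψ i} := by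
    ext x; simp [Vvoid, Set.mem_iInter]
  rw [h1]
  exact isClosed_closure.inter (isClosed_iInter fun i =>
    isClosed_le continuous_const ((contSq (s i)).sub continuous_const))

/-- The auxiliary "shrunk cell with margin `t`". -/
def Wset (D : Set (EuclideanSpace ℝ (Fin d)))
    (s : Fin N → EuclideanSpace ℝ (Fin d)) (ψ : Fin N → ℝ) (i : Fin N) (t : ℝ) :
    Set (EuclideanSpace ℝ (Fin d)) :=
  {x | x ∈ closure D ∧ ‖x - s i‖ ^ 2 - ψ i + t ≤ 0 ∧
    ∀ j : Fin N, j ≠ i → ‖x - s i‖ ^ 2 - ψ i + t ≤ ‖x - s j‖ ^ 2 - ψ j}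

lemma isClosed_Wset (D : Set (EuclideanSpace ℝ (Fin d)))
    (s : Fin N → EuclideanSpace ℝ (Fin d)) (ψ : Fin N → ℝ) (i : Fin N) (t : ℝ) :
    IsClosed (Wset D s ψ i t) := by
  have h1 : Wset D s ψ i t = (closure D ∩ {x | ‖x - s i‖ ^ 2 - ψ i + t ≤ 0}) ∩
      ⋂ j : Fin N, ⋂ _ : j ≠ i, {x | ‖x - s i‖ ^ 2 - ψ i + t ≤ ‖x - s j‖ ^ 2 - ψ j} := by
    ext x; simp [Wset, Set.mem_iInter, and_assoc]; tauto
  rw [h1]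
  refine (isClosed_closure.inter ?_).inter
    (isClosed_iInter fun j => isClosed_iInter fun _ => ?_)
  · exact isClosed_le (((contSq (s i)).sub continuous_const).add continuous_const)
      continuous_const
  · exact isClosed_le (((contSq (s i)).sub continuous_const).add continuous_const)
      ((contSq (s j)).sub continuous_const)

lemma integral_indicator_closure (D : Set (EuclideanSpace ℝ (Fin d)))
    (V : Set (EuclideanSpace ℝ (Fin d))) (hV : MeasurableSet V) (hVD : V ⊆ closure D) :
    (∫ x in closure D, V.indicator (fun _ => (1:ℝ)) x) = (volume V).toReal := by
  rw [setIntegral_indicator hV]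
  rw [Set.inter_eq_self_of_subset_right hVD]
  rw [setIntegral_const, smul_eq_mul, mul_one]; rfl

lemma indicator_integrableOn (D : Set (EuclideanSpace ℝ (Fin d)))
    (hDb : Bornology.IsBounded D)
    (V : Set (EuclideanSpace ℝ (Fin d))) (hV : MeasurableSet V) (hVD : V ⊆ closure D) :
    IntegrableOn (V.indicator (fun _ => (1:ℝ))) (closure D) := by
  have hfin : volume V < ⊤ :=
    lt_of_le_of_lt (measure_mono hVD) hDb.isCompact_closure.measure_lt_top
  exact ((integrable_indicator_iff hV).mpr ((integrableOn_const_iff).mpr (Or.inr hfin))).integrableOn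

lemma sum_update_diff (ν ψ : Fin N → ℝ) (i : Fin N) (a : ℝ) :
    ∑ j, ν j * Function.update ψ i a j = (∑ j, ν j * ψ j) + ν i * (a - ψ i) := by
  have h : ∀ j, ν j * Function.update ψ i a j
      = ν j * ψ j + (if j = i then ν i * (a - ψ i) else 0) := by
    intro j
    by_cases hj : j = i
    · subst hj; rw [Function.update_self]; ring_nf; simp
    · rw [Function.update_of_ne hj]; simp [hj]
  rw [Finset.sum_congr rfl (fun j _ => h j), Finset.sum_add_distrib,
    Finset.sum_ite_eq' Finset.univ i (fun _ => ν i * (a - ψ i))]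
  simp

/-- First variational inequality at a maximizer of `Gfun`. -/
lemma key1 (hne : (Finset.univ : Finset (Fin N)).Nonempty)
    (D : Set (EuclideanSpace ℝ (Fin d))) (hDb : Bornology.IsBounded D)
    (s : Fin N → EuclideanSpace ℝ (Fin d)) (ν : Fin N → ℝ)
    (ψ : Fin N → ℝ) (hmax : ∀ ψ', Gfun hne D s ν ψ' ≤ Gfun hne D s ν ψ)
    (i : Fin N) (t : ℝ) (ht : 0 < t) :
    ν i ≤ (volume (Vcell D s (Function.update ψ i (ψ i + t)) i)).toReal := by
  set ψ' := Function.update ψ i (ψ i + t) with hψ'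
  set V' := Vcell D s ψ' i with hV'
  have hV'closed : IsClosed V' := isClosed_Vcell D s ψ' i
  have hV'D : V' ⊆ closure D := fun x hx => hx.1.1
  have hpt : ∀ x ∈ closure D,
      phi hne s ψ x - t * V'.indicator (fun _ => (1:ℝ)) x ≤ phi hne s ψ' x := by
    intro x hx
    by_cases hmem : x ∈ V'
    · rw [Set.indicator_of_mem hmem, mul_one]
      apply le_phi hne (by linarith [phi_nonpos hne s ψ x])
      intro j
      have hj : ψ' j ≤ ψ j + t := by
        by_cases hji : j = i
        · subst hji; rw [hψ', Function.update_self]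
        · rw [hψ', Function.update_of_ne hji]; linarith
      have := phi_le hne s ψ x j
      linarith
    · rw [Set.indicator_of_notMem hmem, mul_zero, sub_zero]
      apply le_phi hne (phi_nonpos hne s ψ x)
      intro j
      by_cases hji : j = i
      · subst hji
        rw [hV', Vcell, Lag] at hmem
        simp only [Set.mem_inter_iff, Set.mem_setOf_eq, not_and_or] at hmem
        rcases hmem with hmem | hmem
        · rcases hmem with h | h
          · exact absurd hx h
          · push_neg at h
            obtain ⟨k, hki, hk⟩ := h
            have h1 : phi hne s ψ x ≤ ‖x - s k‖ ^ 2 - ψ k := phi_le hne s ψ x k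
            have h2 : ψ' k = ψ k := Function.update_of_ne hki _ _
            rw [h2] at hk
            linarith
        · push_neg at hmem
          have h1 : phi hne s ψ x ≤ 0 := phi_nonpos hne s ψ x
          linarith
      · rw [hψ', Function.update_of_ne hji]
        exact phi_le hne s ψ x j
  have hind := indicator_integrableOn D hDb V' hV'closed.measurableSet hV'D
  have hInt1 := phi_integrableOn hne D hDb s ψ
  have hInt2 := phi_integrableOn hne D hDb s ψ'
  have hint : (∫ x in closure D, phi hne s ψ x) - t * (volume V').toReal
      ≤ ∫ x in closure D, phi hne s ψ' x := by
    have hsub : IntegrableOn (fun x => phi hne s ψ x - t * V'.indicator (fun _ => (1:ℝ)) x)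
        (closure D) := hInt1.sub (hind.const_mul t)
    have := setIntegral_mono_on hsub hInt2 isClosed_closure.measurableSet hpt
    rw [integral_sub hInt1 (hind.const_mul t), integral_const_mul,
      integral_indicator_closure D V' hV'closed.measurableSet hV'D] at this
    exact this
  have hsum : ∑ j, ν j * ψ' j = (∑ j, ν j * ψ j) + ν i * t := by
    rw [hψ', sum_update_diff]; ring
  have hle := hmax ψ'
  rw [Gfun, Gfun, hsum] at hle
  have hfinal : ν i * t ≤ (volume V').toReal * t := by nlinarith
  exact le_of_mul_le_mul_right (by linarith [hfinal]) ht

/-- Second variational inequality at a maximizer of `Gfun`. -/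
lemma key2 (hne : (Finset.univ : Finset (Fin N)).Nonempty)
    (D : Set (EuclideanSpace ℝ (Fin d))) (hDb : Bornology.IsBounded D)
    (s : Fin N → EuclideanSpace ℝ (Fin d)) (ν : Fin N → ℝ)
    (ψ : Fin N → ℝ) (hmax : ∀ ψ', Gfun hne D s ν ψ' ≤ Gfun hne D s ν ψ)
    (i : Fin N) (t : ℝ) (ht : 0 < t) :
    (volume (Wset D s ψ i t)).toReal ≤ ν i := by
  set ψ'' := Function.update ψ i (ψ i - t) with hψ''
  set W := Wset D s ψ i t with hW
  have hWclosed : IsClosed W := isClosed_Wset D s ψ i t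
  have hWD : W ⊆ closure D := fun x hx => hx.1
  have hpt : ∀ x ∈ closure D,
      phi hne s ψ x + t * W.indicator (fun _ => (1:ℝ)) x ≤ phi hne s ψ'' x := by
    intro x hx
    by_cases hmem : x ∈ W
    · rw [Set.indicator_of_mem hmem, mul_one]
      obtain ⟨-, h0, hj⟩ := hmem
      have hpi : phi hne s ψ x ≤ ‖x - s i‖ ^ 2 - ψ i := phi_le hne s ψ x i
      apply le_phi hne (by linarith)
      intro j
      by_cases hji : j = i
      · subst hji; rw [hψ'', Function.update_self]; linarith
      · rw [hψ'', Function.update_of_ne hji]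
        have := hj j hji
        linarith
    · rw [Set.indicator_of_notMem hmem, mul_zero, add_zero]
      apply le_phi hne (phi_nonpos hne s ψ x)
      intro j
      have hj : ψ'' j ≤ ψ j := by
        by_cases hji : j = i
        · subst hji; rw [hψ'', Function.update_self]; linarith
        · rw [hψ'', Function.update_of_ne hji]
      have := phi_le hne s ψ x j
      linarith
  have hind := indicator_integrableOn D hDb W hWclosed.measurableSet hWD
  have hInt1 := phi_integrableOn hne D hDb s ψ
  have hInt2 := phi_integrableOn hne D hDb s ψ''
  have hint : (∫ x in closure D, phi hne s ψ x) + t * (volume W).toReal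
      ≤ ∫ x in closure D, phi hne s ψ'' x := by
    have hsub : IntegrableOn (fun x => phi hne s ψ x + t * W.indicator (fun _ => (1:ℝ)) x)
        (closure D) := hInt1.add (hind.const_mul t)
    have := setIntegral_mono_on hsub hInt2 isClosed_closure.measurableSet hpt
    rw [integral_add hInt1 (hind.const_mul t), integral_const_mul,
      integral_indicator_closure D W hWclosed.measurableSet hWD] at this
    exact this
  have hsum : ∑ j, ν j * ψ'' j = (∑ j, ν j * ψ j) - ν i * t := by
    rw [hψ'', sum_update_diff]; ring
  have hle := hmax ψ''
  rw [Gfun, Gfun, hsum] at hle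
  have h2 : (volume W).toReal * t ≤ ν i * t := by nlinarith
  exact le_of_mul_le_mul_right h2 ht

lemma le_of_le_add_inv {a b : ℝ} (h : ∀ n : ℕ, a ≤ b + 1 / (n + 1)) : a ≤ b := by
  by_contra hc
  push_neg at hc
  obtain ⟨n, hn⟩ := exists_nat_one_div_lt (sub_pos.mpr hc)
  linarith [h n]

lemma Vcell_update_mono (D : Set (EuclideanSpace ℝ (Fin d)))
    (s : Fin N → EuclideanSpace ℝ (Fin d)) (ψ : Fin N → ℝ) (i : Fin N)
    {t t' : ℝ} (htt : t ≤ t') :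
    Vcell D s (Function.update ψ i (ψ i + t)) i ⊆
      Vcell D s (Function.update ψ i (ψ i + t')) i := by
  rintro x ⟨⟨hxD, hlag⟩, hball⟩
  refine ⟨⟨hxD, fun j hj => ?_⟩, ?_⟩
  · have h := hlag j hj
    simp only [Function.update_self, Function.update_of_ne hj] at h ⊢
    linarith
  · simp only [Set.mem_setOf_eq, Function.update_self] at hball ⊢
    linarith

lemma vol_Vcell_ge (D : Set (EuclideanSpace ℝ (Fin d))) (hDb : Bornology.IsBounded D)
    (s : Fin N → EuclideanSpace ℝ (Fin d)) (ψ : Fin N → ℝ) (i : Fin N) (c : ℝ)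
    (hk : ∀ t : ℝ, 0 < t →
      c ≤ (volume (Vcell D s (Function.update ψ i (ψ i + t)) i)).toReal) :
    c ≤ (volume (Vcell D s ψ i)).toReal := by
  set Sq : ℕ → Set (EuclideanSpace ℝ (Fin d)) :=
    fun n => Vcell D s (Function.update ψ i (ψ i + 1 / (n + 1))) i with hSq
  have hpos : ∀ n : ℕ, (0:ℝ) < 1 / (n + 1) := fun n => by positivity
  have hAnti : Antitone Sq := by
    intro n m hnm
    apply Vcell_update_mono
    apply one_div_le_one_div_of_le (by positivity)
    have : (n:ℝ) ≤ m := Nat.cast_le.mpr hnm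
    linarith
  have hiInter : ⋂ n, Sq n = Vcell D s ψ i := by
    ext x
    simp only [Set.mem_iInter]
    constructor
    · intro hx
      refine ⟨⟨(hx 0).1.1, fun j hj => ?_⟩, ?_⟩
      · apply le_of_le_add_inv (b := ‖x - s j‖ ^ 2 - ψ j)
        intro n
        have h := (hx n).1.2 j hj
        simp only [Function.update_self, Function.update_of_ne hj] at h
        linarith
      · show ‖x - s i‖ ^ 2 ≤ ψ i
        apply le_of_le_add_inv
        intro n
        have h := (hx n).2
        simp only [Set.mem_setOf_eq, Function.update_self] at h
        exact h
    · intro hx n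
      have h0 : Vcell D s ψ i = Vcell D s (Function.update ψ i (ψ i + 0)) i := by
        rw [add_zero, Function.update_eq_self]
      exact Vcell_update_mono D s ψ i (hpos n).le (h0 ▸ hx)
  have hfin : volume (Vcell D s ψ i) ≠ ⊤ :=
    ne_of_lt (lt_of_le_of_lt (measure_mono (fun x hx => hx.1.1))
      hDb.isCompact_closure.measure_lt_top)
  have hfin' : volume (Sq 0) ≠ ⊤ :=
    ne_of_lt (lt_of_le_of_lt (measure_mono (fun x hx => hx.1.1))
      hDb.isCompact_closure.measure_lt_top)
  have htend := tendsto_measure_iInter_atTop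
    (fun n => (isClosed_Vcell D s _ i).measurableSet.nullMeasurableSet) hAnti ⟨0, hfin'⟩
  rw [hiInter] at htend
  have htR : Tendsto (fun n => (volume (Sq n)).toReal) atTop
      (𝓝 ((volume (Vcell D s ψ i)).toReal)) :=
    (ENNReal.tendsto_toReal hfin).comp htend
  exact ge_of_tendsto htR (Eventually.of_forall fun n => hk _ (hpos n))

lemma Wset_mono (D : Set (EuclideanSpace ℝ (Fin d)))
    (s : Fin N → EuclideanSpace ℝ (Fin d)) (ψ : Fin N → ℝ) (i : Fin N)
    {t t' : ℝ} (htt : t' ≤ t) : Wset D s ψ i t ⊆ Wset D s ψ i t' := by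
  rintro x ⟨hxD, h0, hj⟩
  exact ⟨hxD, by linarith, fun j hji => by linarith [hj j hji]⟩

lemma vol_Vcell_le (D : Set (EuclideanSpace ℝ (Fin d)))
    (hDb : Bornology.IsBounded D)
    (s : Fin N → EuclideanSpace ℝ (Fin d)) (hs : Function.Injective s)
    (ψ : Fin N → ℝ) (i : Fin N) (c : ℝ)
    (hnullsp : ∀ (a : EuclideanSpace ℝ (Fin d)) (r : ℝ),
      volume {x : EuclideanSpace ℝ (Fin d) | ‖x - a‖ ^ 2 = r} = 0)
    (hnullbi : ∀ (a b : EuclideanSpace ℝ (Fin d)), a ≠ b → ∀ r : ℝ,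
      volume {x : EuclideanSpace ℝ (Fin d) | ‖x - a‖ ^ 2 - ‖x - b‖ ^ 2 = r} = 0)
    (hk : ∀ t : ℝ, 0 < t → (volume (Wset D s ψ i t)).toReal ≤ c) :
    (volume (Vcell D s ψ i)).toReal ≤ c := by
  set Wlim : Set (EuclideanSpace ℝ (Fin d)) :=
    {x | x ∈ closure D ∧ ‖x - s i‖ ^ 2 - ψ i < 0 ∧
      ∀ j : Fin N, j ≠ i → ‖x - s i‖ ^ 2 - ψ i < ‖x - s j‖ ^ 2 - ψ j} with hWlim
  set Sq : ℕ → Set (EuclideanSpace ℝ (Fin d)) := fun n => Wset D s ψ i (1 / (n + 1)) with hSq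
  have hpos : ∀ n : ℕ, (0:ℝ) < 1 / (n + 1) := fun n => by positivity
  have hMono : Monotone Sq := by
    intro n m hnm
    apply Wset_mono
    apply one_div_le_one_div_of_le (by positivity)
    have : (n:ℝ) ≤ m := Nat.cast_le.mpr hnm
    linarith
  have hiUnion : ⋃ n, Sq n = Wlim := by
    ext x
    simp only [Set.mem_iUnion]
    constructor
    · rintro ⟨n, hxD, h0, hj⟩
      exact ⟨hxD, by linarith [hpos n], fun j hji => by linarith [hj j hji, hpos n]⟩
    · rintro ⟨hxD, h0, hj⟩
      set F : Finset ℝ := insert (-(‖x - s i‖ ^ 2 - ψ i))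
        ((Finset.univ.erase i).image fun j => (‖x - s j‖ ^ 2 - ψ j) - (‖x - s i‖ ^ 2 - ψ i))
        with hF
      have hFne : F.Nonempty := ⟨_, Finset.mem_insert_self _ _⟩
      have hδpos : 0 < F.min' hFne := by
        rw [Finset.lt_min'_iff]
        intro y hy
        rw [hF, Finset.mem_insert] at hy
        rcases hy with rfl | hy
        · linarith
        · obtain ⟨j, hjmem, rfl⟩ := Finset.mem_image.mp hy
          have hji : j ≠ i := (Finset.mem_erase.mp hjmem).1
          linarith [hj j hji]
      obtain ⟨n, hn⟩ := exists_nat_one_div_lt hδpos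
      refine ⟨n, hxD, ?_, fun j hji => ?_⟩
      · have h1 : F.min' hFne ≤ -(‖x - s i‖ ^ 2 - ψ i) :=
          Finset.min'_le _ _ (Finset.mem_insert_self _ _)
        linarith
      · have hmem : (‖x - s j‖ ^ 2 - ψ j) - (‖x - s i‖ ^ 2 - ψ i) ∈ F := by
          rw [hF, Finset.mem_insert]
          exact Or.inr (Finset.mem_image.mpr
            ⟨j, Finset.mem_erase.mpr ⟨hji, Finset.mem_univ j⟩, rfl⟩)
        have h1 := Finset.min'_le _ _ hmem
        linarith
  have htend := tendsto_measure_iUnion_atTop (μ := volume) hMono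
  rw [hiUnion] at htend
  have hWlimD : Wlim ⊆ closure D := fun x hx => hx.1
  have hfin : volume Wlim ≠ ⊤ :=
    ne_of_lt (lt_of_le_of_lt (measure_mono hWlimD) hDb.isCompact_closure.measure_lt_top)
  have htR : Tendsto (fun n => (volume (Sq n)).toReal) atTop (𝓝 ((volume Wlim).toReal)) :=
    (ENNReal.tendsto_toReal hfin).comp htend
  have hWlimle : (volume Wlim).toReal ≤ c :=
    le_of_tendsto htR (Eventually.of_forall fun n => hk _ (hpos n))
  set Z : Set (EuclideanSpace ℝ (Fin d)) :=
    {x | ‖x - s i‖ ^ 2 = ψ i} ∪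
      ⋃ j : Fin N, ⋃ _ : j ≠ i, {x | ‖x - s i‖ ^ 2 - ‖x - s j‖ ^ 2 = ψ i - ψ j} with hZ
  have hZnull : volume Z = 0 := by
    rw [hZ]
    apply measure_union_null (hnullsp (s i) (ψ i))
    refine measure_iUnion_null fun j => measure_iUnion_null fun hji => ?_
    exact hnullbi (s i) (s j) (fun h => hji ((hs h).symm)) _
  have hsubZ : Vcell D s ψ i ⊆ Wlim ∪ Z := by
    rintro x ⟨⟨hxD, hlag⟩, hball⟩
    by_cases hx1 : ‖x - s i‖ ^ 2 - ψ i < 0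
    · by_cases hx2 : ∀ j : Fin N, j ≠ i → ‖x - s i‖ ^ 2 - ψ i < ‖x - s j‖ ^ 2 - ψ j
      · exact Or.inl ⟨hxD, hx1, hx2⟩
      · push_neg at hx2
        obtain ⟨j, hji, hj⟩ := hx2
        have := hlag j hji
        refine Or.inr (Or.inr ?_)
        refine Set.mem_iUnion.mpr ⟨j, Set.mem_iUnion.mpr ⟨hji, ?_⟩⟩
        show ‖x - s i‖ ^ 2 - ‖x - s j‖ ^ 2 = ψ i - ψ j
        linarith
    · refine Or.inr (Or.inl ?_)
      show ‖x - s i‖ ^ 2 = ψ i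
      have : ‖x - s i‖ ^ 2 ≤ ψ i := hball
      linarith
  have h1 : volume (Vcell D s ψ i) ≤ volume Wlim := by
    calc volume (Vcell D s ψ i) ≤ volume (Wlim ∪ Z) := measure_mono hsubZ
      _ ≤ volume Wlim + volume Z := measure_union_le _ _
      _ = volume Wlim := by rw [hZnull, add_zero]
  calc (volume (Vcell D s ψ i)).toReal
      ≤ (volume Wlim).toReal := ENNReal.toReal_mono hfin h1
    _ ≤ c := hWlimle

end Aux

/-- Existence of a weight vector realizing prescribed cell measures. -/
theorem stmt0 {d N : ℕ} (hd : 1 ≤ d) (hN : 1 ≤ N)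
    (D : Set (EuclideanSpace ℝ (Fin d)))
    (hDo : IsOpen D) (hDne : D.Nonempty) (hDb : Bornology.IsBounded D)
    (hfr : volume (frontier D) = 0)
    (s : Fin N → EuclideanSpace ℝ (Fin d)) (hsD : ∀ i, s i ∈ D)
    (hs : Function.Injective s)
    (ν : Fin N → ℝ) (hν : ∀ i, 0 < ν i)
    (hsum : ∑ i, ν i < (volume D).toReal) :
    ∃ ψ : Fin N → ℝ,
      (∀ i, (volume (Vcell D s ψ i)).toReal = ν i) ∧
      (volume (Vvoid D s ψ)).toReal = (volume D).toReal - ∑ i, ν i := by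
  haveI : Nonempty (Fin N) := Fin.pos_iff_nonempty.mp hN
  have hne : (Finset.univ : Finset (Fin N)).Nonempty := Finset.univ_nonempty
  have hnullsp := null_sphere_sq hd
  have hnullbi := @null_bisector d
  have hcomp : IsCompact (closure D) := hDb.isCompact_closure
  have hfinD : volume (closure D) < ⊤ := hcomp.measure_lt_top
  -- closure has the same volume as D
  have hclvol : volume (closure D) = volume D := by
    apply le_antisymm
    · have hsub : closure D ⊆ D ∪ frontier D := by
        intro x hx
        by_cases h : x ∈ D
        · exact Or.inl h
        · exact Or.inr ⟨hx, by rwa [hDo.interior_eq]⟩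
      calc volume (closure D) ≤ volume (D ∪ frontier D) := measure_mono hsub
        _ ≤ volume D + volume (frontier D) := measure_union_le _ _
        _ = volume D := by rw [hfr, add_zero]
    · exact measure_mono subset_closure
  -- a uniform bound for ‖x - s i‖² on closure D
  obtain ⟨r0, hr0⟩ := hDb.subset_closedBall 0
  set r : ℝ := max r0 0 with hr
  have hsubB : closure D ⊆ Metric.closedBall 0 r :=
    closure_minimal (hr0.trans (Metric.closedBall_subset_closedBall (le_max_left _ _)))
      Metric.isClosed_closedBall
  set R2 : ℝ := (2 * r) ^ 2 with hR2def
  have hR2 : ∀ x ∈ closure D, ∀ i, ‖x - s i‖ ^ 2 ≤ R2 := by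
    intro x hx i
    have hxr : ‖x‖ ≤ r := mem_closedBall_zero_iff.mp (hsubB hx)
    have hsr : ‖s i‖ ≤ r := mem_closedBall_zero_iff.mp (hsubB (subset_closure (hsD i)))
    have hnorm : ‖x - s i‖ ≤ 2 * r := by
      calc ‖x - s i‖ ≤ ‖x‖ + ‖s i‖ := norm_sub_le _ _
        _ ≤ 2 * r := by linarith
    calc ‖x - s i‖ ^ 2 ≤ (2 * r) ^ 2 := by
          apply pow_le_pow_left₀ (norm_nonneg _) hnorm
      _ = R2 := rfl
  have hR2nonneg : 0 ≤ R2 := sq_nonneg _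
  -- constants
  set A : ℝ := (volume (closure D)).toReal with hA
  set S : ℝ := ∑ i, ν i with hS
  set ε : ℝ := Finset.univ.inf' hne ν with hεdef
  have hSA : S < A := by
    have : A = (volume D).toReal := by rw [hA, hclvol]
    rw [this]; exact hsum
  have hSpos : 0 < S := Finset.sum_pos (fun i _ => hν i) hne
  have hεpos : 0 < ε := by
    rw [hεdef, Finset.lt_inf'_iff]
    exact fun i _ => hν i
  -- maximizer of Gfun
  set G : (Fin N → ℝ) → ℝ := Gfun hne D s ν with hG
  set K0 : ℝ := G 0 with hK0
  set R' : ℝ := max (max (max R2 ((A * R2 - K0) / (A - S)))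
    (-(min 0 (K0 / S) - (max (A * R2 - K0) (S * R2 - K0)) / ε))) 0 with hR'def
  have hR' : 0 ≤ R' := le_max_right _ _
  have hcoer : ∀ χ, G 0 ≤ G χ → χ ∈ Metric.closedBall (0 : Fin N → ℝ) R' := by
    intro χ hχ
    have hup := Gfun_upper hne D hDb s ν hν R2 hR2 χ
    have habs := coercive_bound hne A S ε R2 K0 hSA hSpos hεpos hR2nonneg χ
      (le_trans hχ hup)
    rw [Metric.mem_closedBall, dist_zero_right, pi_norm_le_iff_of_nonneg hR']
    intro i
    rw [Real.norm_eq_abs]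
    exact habs i
  obtain ⟨ψ, hψmax⟩ := exists_max G (Gfun_continuous hne D hDb s ν) R' hR' hcoer
  -- volumes of cells are finite
  have hVfin : ∀ i, volume (Vcell D s ψ i) ≠ ⊤ := fun i =>
    ne_of_lt (lt_of_le_of_lt (measure_mono (fun x hx => hx.1.1)) hfinD)
  -- volumes of cells are exactly ν i
  have hVeq : ∀ i, (volume (Vcell D s ψ i)).toReal = ν i := by
    intro i
    have hge : ν i ≤ (volume (Vcell D s ψ i)).toReal :=
      vol_Vcell_ge D hDb s ψ i (ν i) (fun t ht => key1 hne D hDb s ν ψ hψmax i t ht)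
    have hle : (volume (Vcell D s ψ i)).toReal ≤ ν i :=
      vol_Vcell_le D hDb s hs ψ i (ν i) hnullsp hnullbi
        (fun t ht => key2 hne D hDb s ν ψ hψmax i t ht)
    linarith
  refine ⟨ψ, hVeq, ?_⟩
  -- the cover of closure D
  have hcover : closure D = Vvoid D s ψ ∪ ⋃ i, Vcell D s ψ i := by
    apply Set.eq_of_subset_of_subset
    · intro x hx
      by_cases hvoid : ∀ i, 0 ≤ ‖x - s i‖ ^ 2 - ψ i
      · exact Or.inl ⟨hx, hvoid⟩
      · push_neg at hvoid
        obtain ⟨i0, hi0⟩ := hvoid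
        obtain ⟨im, _, him⟩ := Finset.exists_min_image Finset.univ
          (fun i => ‖x - s i‖ ^ 2 - ψ i) ⟨i0, Finset.mem_univ i0⟩
        refine Or.inr (Set.mem_iUnion.mpr ⟨im, ⟨⟨hx, fun j _ => him j (Finset.mem_univ j)⟩, ?_⟩⟩)
        show ‖x - s im‖ ^ 2 ≤ ψ im
        have h1 := him i0 (Finset.mem_univ i0)
        linarith
    · intro x hx
      rcases hx with hx | hx
      · exact hx.1
      · obtain ⟨i, hi⟩ := Set.mem_iUnion.mp hx
        exact hi.1.1
  -- pairwise a.e. disjointness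
  have hdisjV : Pairwise (Function.onFun (AEDisjoint volume) fun i => Vcell D s ψ i) := by
    intro i j hij
    show volume (Vcell D s ψ i ∩ Vcell D s ψ j) = 0
    have hsub : Vcell D s ψ i ∩ Vcell D s ψ j ⊆ {x : EuclideanSpace ℝ (Fin d) |
        ‖x - s i‖ ^ 2 - ‖x - s j‖ ^ 2 = ψ i - ψ j} := by
      rintro x ⟨⟨⟨-, hlagi⟩, -⟩, ⟨⟨-, hlagj⟩, -⟩⟩
      have h1 := hlagi j (Ne.symm hij)
      have h2 := hlagj i hij
      show ‖x - s i‖ ^ 2 - ‖x - s j‖ ^ 2 = ψ i - ψ j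
      linarith
    exact measure_mono_null hsub (hnullbi (s i) (s j) (fun h => hij (hs h)) _)
  have hUmeas : MeasurableSet (⋃ i, Vcell D s ψ i) :=
    MeasurableSet.iUnion fun i => (isClosed_Vcell D s ψ i).measurableSet
  have hAED : AEDisjoint volume (Vvoid D s ψ) (⋃ i, Vcell D s ψ i) := by
    show volume (Vvoid D s ψ ∩ ⋃ i, Vcell D s ψ i) = 0
    have hsub : Vvoid D s ψ ∩ (⋃ i, Vcell D s ψ i) ⊆ ⋃ i : Fin N,
        {x : EuclideanSpace ℝ (Fin d) | ‖x - s i‖ ^ 2 = ψ i} := by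
      rintro x ⟨⟨-, hvoid⟩, hx⟩
      obtain ⟨i, hi⟩ := Set.mem_iUnion.mp hx
      refine Set.mem_iUnion.mpr ⟨i, ?_⟩
      have h1 : ‖x - s i‖ ^ 2 ≤ ψ i := hi.2
      have h2 := hvoid i
      show ‖x - s i‖ ^ 2 = ψ i
      linarith
    exact measure_mono_null hsub (measure_iUnion_null fun i => hnullsp (s i) (ψ i))
  have hU : volume (⋃ i, Vcell D s ψ i) = ∑ i, volume (Vcell D s ψ i) := by
    rw [measure_iUnion₀ hdisjV
      (fun i => (isClosed_Vcell D s ψ i).measurableSet.nullMeasurableSet), tsum_fintype]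
  have htotal : volume D = volume (Vvoid D s ψ) + ∑ i, volume (Vcell D s ψ i) := by
    rw [← hclvol, hcover, measure_union₀ hUmeas.nullMeasurableSet hAED, hU]
  have hVvfin : volume (Vvoid D s ψ) ≠ ⊤ :=
    ne_of_lt (lt_of_le_of_lt (measure_mono (fun x hx => hx.1)) hfinD)
  have hDfin : volume D ≠ ⊤ :=
    ne_of_lt (lt_of_le_of_lt (measure_mono subset_closure) hfinD)
  have hSumFin : (∑ i, volume (Vcell D s ψ i)) ≠ ⊤ := by
    rw [← hU]
    exact ne_of_lt (lt_of_le_of_lt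
      (measure_mono (Set.iUnion_subset fun i x hx => hx.1.1)) hfinD)
  have htR := congrArg ENNReal.toReal htotal
  rw [ENNReal.toReal_add hVvfin hSumFin, ENNReal.toReal_sum (fun i _ => hVfin i)] at htR
  have hsumν : ∑ i, (volume (Vcell D s ψ i)).toReal = ∑ i, ν i :=
    Finset.sum_congr rfl (fun i _ => hVeq i)
  rw [hsumν] at htR
  linarith
end
end

section
/- Let d ≥ 1, let D ⊆ ℝ^d be a bounded open set, let s_1, …, s_N ∈ ℝ^d be pairwise distinct, and let ν ∈ ℝ^N. Then the function ψ ↦ K(s,ν,ψ) is concave on ℝ^N and is differentiable at every ψ ∈ ℝ^N, with gradient ∇_ψ K(s,ν,ψ) = F(s,ν,ψ), where F(s,ν,ψ) ∈ ℝ^N is the vector with components F_i(s,ν,ψ) := ν_i − vol(V_i(s,ψ)). -/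
open MeasureTheory

noncomputable section

namespace Stmt2Aux

variable {d N : ℕ}

abbrev Esp (d : ℕ) : Type := EuclideanSpace ℝ (Fin d)

local notation "⟪" x ", " y "⟫" => @inner ℝ _ _ x y

/-- cost value of cell `i` at point `x` with weights `ψ` -/
def fv (s : Fin N → Esp d) (ψ : Fin N → ℝ) (i : Fin N) (x : Esp d) : ℝ := ‖x - s i‖ ^ 2 - ψ i

def qv (s : Fin N → Esp d) (ψ : Fin N → ℝ) (x : Esp d) (o : Option (Fin N)) : ℝ :=
  o.elim 0 (fun i => fv s ψ i x)

/-- `min(0, min_i fv i)` -/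
def mv (s : Fin N → Esp d) (ψ : Fin N → ℝ) (x : Esp d) : ℝ :=
  Finset.univ.inf' Finset.univ_nonempty (qv s ψ x)

lemma mv_nonpos (s : Fin N → Esp d) (ψ : Fin N → ℝ) (x : Esp d) : mv s ψ x ≤ 0 :=
  Finset.inf'_le _ (Finset.mem_univ none)

lemma mv_le (s : Fin N → Esp d) (ψ : Fin N → ℝ) (i : Fin N) (x : Esp d) :
    mv s ψ x ≤ fv s ψ i x :=
  Finset.inf'_le _ (Finset.mem_univ (some i))

lemma le_mv (s : Fin N → Esp d) (ψ : Fin N → ℝ) (x : Esp d) (c : ℝ) (h0 : c ≤ 0)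
    (h : ∀ i, c ≤ fv s ψ i x) : c ≤ mv s ψ x :=
  Finset.le_inf' _ _ (fun o _ => by
    cases o with
    | none => exact h0
    | some i => exact h i)

lemma mv_cases (s : Fin N → Esp d) (ψ : Fin N → ℝ) (x : Esp d) :
    mv s ψ x = 0 ∨ ∃ i, mv s ψ x = fv s ψ i x := by
  obtain ⟨o, -, ho⟩ := Finset.exists_mem_eq_inf' (Finset.univ_nonempty) (qv s ψ x)
  cases o with
  | none => exact Or.inl (by rw [mv, ho]; rfl)
  | some i => exact Or.inr ⟨i, by rw [mv, ho]; rfl⟩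

lemma mv_lip (s : Fin N → Esp d) (ψ φ : Fin N → ℝ) (x : Esp d) :
    mv s ψ x - mv s φ x ≤ dist ψ φ := by
  obtain ⟨o, -, ho⟩ := Finset.exists_mem_eq_inf' (Finset.univ_nonempty) (qv s φ x)
  have h1 : mv s ψ x ≤ qv s ψ x o := Finset.inf'_le _ (Finset.mem_univ o)
  have h2 : qv s ψ x o - qv s φ x o ≤ dist ψ φ := by
    cases o with
    | none => simpa [qv] using dist_nonneg
    | some i =>
      have hle : dist (ψ i) (φ i) ≤ dist ψ φ := dist_le_pi_dist ψ φ i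
      rw [Real.dist_eq] at hle
      simp only [qv, Option.elim, fv]
      have h := le_abs_self (φ i - ψ i)
      have habs : |φ i - ψ i| = |ψ i - φ i| := abs_sub_comm _ _
      linarith
  have h3 : mv s φ x = qv s φ x o := ho
  linarith

lemma abs_mv_sub_le (s : Fin N → Esp d) (ψ φ : Fin N → ℝ) (x : Esp d) :
    |mv s ψ x - mv s φ x| ≤ dist ψ φ := by
  rw [abs_le]
  constructor
  · have := mv_lip s φ ψ x
    rw [dist_comm] at this
    linarith
  · exact mv_lip s ψ φ x

lemma continuous_mv (s : Fin N → Esp d) (ψ : Fin N → ℝ) : Continuous (mv s ψ) := by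
  have h : ∀ o : Option (Fin N), Continuous (fun x : Esp d => qv s ψ x o) := by
    intro o
    cases o with
    | none => exact continuous_const
    | some i =>
      exact ((continuous_id.sub continuous_const).norm.pow 2).sub continuous_const
  exact Continuous.finset_inf'_apply Finset.univ_nonempty (fun o _ => h o)

lemma nontriv (hd : 1 ≤ d) : Nontrivial (EuclideanSpace ℝ (Fin d)) := by
  refine ⟨EuclideanSpace.single ⟨0, hd⟩ 1, 0, fun h => ?_⟩
  have := congrArg (fun v : EuclideanSpace ℝ (Fin d) => v ⟨0, hd⟩) h
  simp [EuclideanSpace.single_apply] at this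

lemma hyperplane_null (hd : 1 ≤ d) {v : Esp d} (hv : v ≠ 0) (k : ℝ) :
    volume {x : Esp d | ⟪x, v⟫ = k} = 0 := by
  set p : Esp d := (k / ‖v‖ ^ 2) • v with hp
  set S : AffineSubspace ℝ (Esp d) := AffineSubspace.mk' p (LinearMap.ker (innerSL ℝ v : Esp d →ₗ[ℝ] ℝ)) with hS
  have hvp : ⟪v, p⟫ = k := by
    rw [hp, real_inner_smul_right, real_inner_self_eq_norm_sq]
    have : ‖v‖ ^ 2 ≠ 0 := pow_ne_zero _ (norm_ne_zero_iff.2 hv)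
    field_simp
  have hmem : ∀ x : Esp d, x ∈ S ↔ ⟪x, v⟫ = k := by
    intro x
    rw [hS, AffineSubspace.mem_mk']
    simp only [vsub_eq_sub, LinearMap.mem_ker]
    rw [show ((innerSL ℝ v : Esp d →ₗ[ℝ] ℝ)) (x - p) = ⟪v, x - p⟫ from rfl, inner_sub_right, hvp,
      sub_eq_zero, real_inner_comm]
  have hne : S ≠ ⊤ := by
    intro h
    have hpv : (p + v) ∈ S := h ▸ AffineSubspace.mem_top ℝ _ _
    rw [hmem] at hpv
    rw [real_inner_comm] at hvp
    have hzero : ⟪v, v⟫ = 0 := by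
      have h2 : ⟪p + v, v⟫ = ⟪p, v⟫ + ⟪v, v⟫ := inner_add_left _ _ _
      rw [hpv, hvp] at h2; linarith
    exact hv (inner_self_eq_zero.1 hzero)
  have heq : {x : Esp d | ⟪x, v⟫ = k} = (S : Set (Esp d)) := by
    ext x; exact (hmem x).symm
  rw [heq]
  exact Measure.addHaar_affineSubspace volume S hne

lemma tie_null (hd : 1 ≤ d) {s : Fin N → Esp d} (ψ : Fin N → ℝ) {i j : Fin N}
    (hij : s i ≠ s j) :
    volume {x : Esp d | ‖x - s i‖ ^ 2 - ψ i = ‖x - s j‖ ^ 2 - ψ j} = 0 := by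
  set a := s i; set b := s j
  have hv : b - a ≠ 0 := sub_ne_zero.2 (Ne.symm hij)
  have key : {x : Esp d | ‖x - a‖ ^ 2 - ψ i = ‖x - b‖ ^ 2 - ψ j}
      = {x : Esp d | ⟪x, b - a⟫ = (ψ i - ψ j - ‖a‖ ^ 2 + ‖b‖ ^ 2) / 2} := by
    ext x
    simp only [Set.mem_setOf_eq]
    rw [norm_sub_sq_real, norm_sub_sq_real, inner_sub_right]
    constructor <;> intro h <;> linarith
  rw [key]
  exact hyperplane_null hd hv _

lemma sphere_null (hd : 1 ≤ d) (c : Esp d) (r : ℝ) :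
    volume {x : Esp d | ‖x - c‖ ^ 2 = r} = 0 := by
  have := nontriv hd
  rcases lt_or_ge r 0 with hr | hr
  · convert measure_empty (μ := volume) (α := Esp d)
    ext x; simp only [Set.mem_setOf_eq, Set.mem_empty_iff_false, iff_false]
    intro h; nlinarith [sq_nonneg ‖x - c‖, norm_nonneg (x - c)]
  · have heq : {x : Esp d | ‖x - c‖ ^ 2 = r} = Metric.sphere c (Real.sqrt r) := by
      ext x
      rw [mem_sphere_iff_norm]
      constructor
      · intro h
        rw [← h, Real.sqrt_sq (norm_nonneg _)]
      · intro h
        show ‖x - c‖ ^ 2 = r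
        rw [h, Real.sq_sqrt hr]
    rw [heq]
    exact Measure.addHaar_sphere volume c _

/-- the bad (measure-zero) set of points for weights `ψ` -/
def Bad (s : Fin N → Esp d) (ψ : Fin N → ℝ) : Set (Esp d) :=
  (⋃ i, ⋃ j, {x : Esp d | i ≠ j ∧ ‖x - s i‖ ^ 2 - ψ i = ‖x - s j‖ ^ 2 - ψ j}) ∪
    ⋃ i, {x : Esp d | ‖x - s i‖ ^ 2 = ψ i}

lemma bad_null (hd : 1 ≤ d) {s : Fin N → Esp d} (hs : Function.Injective s) (ψ : Fin N → ℝ) :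
    volume (Bad s ψ) = 0 := by
  rw [Bad]
  refine measure_union_null ?_ ?_
  · refine measure_iUnion_null fun i => measure_iUnion_null fun j => ?_
    rcases eq_or_ne i j with rfl | hij
    · convert measure_empty (μ := volume) (α := Esp d)
      ext x; simp
    · refine measure_mono_null (fun x hx => hx.2) (tie_null hd ψ (fun h => hij (hs h)))
  · exact measure_iUnion_null fun i => sphere_null hd (s i) (ψ i)

variable {D : Set (Esp d)} {s : Fin N → Esp d} {ψ : Fin N → ℝ} {x : Esp d}

lemma mem_Vcell_iff {i : Fin N} :
    x ∈ Vcell D s ψ i ↔ x ∈ closure D ∧ (∀ j, fv s ψ i x ≤ fv s ψ j x) ∧ fv s ψ i x ≤ 0 := by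
  simp only [Vcell, Lag, Set.mem_inter_iff, Set.mem_setOf_eq, fv]
  constructor
  · rintro ⟨⟨h1, h2⟩, h3⟩
    refine ⟨h1, fun j => ?_, by linarith⟩
    rcases eq_or_ne j i with rfl | hj
    · exact le_refl _
    · exact h2 j hj
  · rintro ⟨h1, h2, h3⟩
    exact ⟨⟨h1, fun j _ => h2 j⟩, by linarith⟩

lemma Vcell_subset_closure {i : Fin N} : Vcell D s ψ i ⊆ closure D :=
  fun _ hx => hx.1.1

lemma isClosed_Vcell (i : Fin N) : IsClosed (Vcell D s ψ i) := by
  have hset : Vcell D s ψ i = closure D ∩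
      ((⋂ j, {x : Esp d | j ≠ i → ‖x - s i‖ ^ 2 - ψ i ≤ ‖x - s j‖ ^ 2 - ψ j}) ∩
        {x : Esp d | ‖x - s i‖ ^ 2 ≤ ψ i}) := by
    ext x
    simp only [Vcell, Lag, Set.mem_inter_iff, Set.mem_setOf_eq, Set.mem_iInter]
    tauto
  rw [hset]
  have hcont : ∀ j : Fin N, Continuous fun x : Esp d => ‖x - s j‖ ^ 2 :=
    fun j => (continuous_id.sub continuous_const).norm.pow 2
  refine isClosed_closure.inter (IsClosed.inter (isClosed_iInter fun j => ?_) ?_)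
  · rcases eq_or_ne j i with rfl | hj
    · have : {x : Esp d | j ≠ j → ‖x - s j‖ ^ 2 - ψ j ≤ ‖x - s j‖ ^ 2 - ψ j} = Set.univ := by
        ext x; simp
      rw [this]; exact isClosed_univ
    · have : {x : Esp d | j ≠ i → ‖x - s i‖ ^ 2 - ψ i ≤ ‖x - s j‖ ^ 2 - ψ j}
          = {x : Esp d | ‖x - s i‖ ^ 2 - ψ i ≤ ‖x - s j‖ ^ 2 - ψ j} := by
        ext x; simp [hj]
      rw [this]
      exact isClosed_le ((hcont i).sub continuous_const) ((hcont j).sub continuous_const)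
  · exact isClosed_le (hcont i) continuous_const

lemma measurableSet_Vcell (i : Fin N) : MeasurableSet (Vcell D s ψ i) :=
  (isClosed_Vcell i).measurableSet

lemma mv_eq_of_mem {i : Fin N} (hxi : x ∈ Vcell D s ψ i) : mv s ψ x = fv s ψ i x := by
  rw [mem_Vcell_iff] at hxi
  exact le_antisymm (mv_le s ψ i x) (le_mv s ψ x _ hxi.2.2 hxi.2.1)

lemma Vcell_unique (hbad : x ∉ Bad s ψ) {i j : Fin N}
    (hi : x ∈ Vcell D s ψ i) (hj : x ∈ Vcell D s ψ j) : i = j := by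
  by_contra hij
  rw [mem_Vcell_iff] at hi hj
  have h1 : fv s ψ i x = fv s ψ j x := le_antisymm (hi.2.1 j) (hj.2.1 i)
  exact hbad (Or.inl (Set.mem_iUnion.2 ⟨i, Set.mem_iUnion.2 ⟨j, ⟨hij, h1⟩⟩⟩))

lemma not_bad_sphere (hbad : x ∉ Bad s ψ) (i : Fin N) : fv s ψ i x ≠ 0 := by
  intro h
  refine hbad (Or.inr (Set.mem_iUnion.2 ⟨i, ?_⟩))
  have h2 : ‖x - s i‖ ^ 2 - ψ i = 0 := h
  simpa [Set.mem_setOf_eq, sub_eq_zero] using h2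

lemma mv_zero_of_no_cell (hx : x ∈ closure D) (hno : ∀ i, x ∉ Vcell D s ψ i) :
    mv s ψ x = 0 := by
  rcases mv_cases s ψ x with h | ⟨i, h⟩
  · exact h
  · exfalso
    refine hno i (mem_Vcell_iff.2 ⟨hx, fun j => h ▸ mv_le s ψ j x, h ▸ mv_nonpos s ψ x⟩)

lemma mv_eq_sum (hx : x ∈ closure D) (hbad : x ∉ Bad s ψ) :
    mv s ψ x = ∑ i, Set.indicator (Vcell D s ψ i) (fv s ψ i) x := by
  by_cases hex : ∃ i, x ∈ Vcell D s ψ i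
  · obtain ⟨i, hi⟩ := hex
    rw [Finset.sum_eq_single i]
    · rw [Set.indicator_of_mem hi, mv_eq_of_mem hi]
    · intro j _ hj
      rw [Set.indicator_of_notMem]
      intro hjx
      exact hj (Vcell_unique hbad hjx hi)
    · intro h; exact absurd (Finset.mem_univ i) h
  · push_neg at hex
    rw [mv_zero_of_no_cell hx hex]
    symm
    refine Finset.sum_eq_zero fun i _ => Set.indicator_of_notMem (hex i) _

lemma mv_super (hx : x ∈ closure D) (hbad : x ∉ Bad s ψ) (φ : Fin N → ℝ) :
    mv s φ x ≤ mv s ψ x - ∑ i, Set.indicator (Vcell D s ψ i) (fun _ => φ i - ψ i) x := by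
  by_cases hex : ∃ i, x ∈ Vcell D s ψ i
  · obtain ⟨i, hi⟩ := hex
    have hsum : ∑ j, Set.indicator (Vcell D s ψ j) (fun _ => φ j - ψ j) x = φ i - ψ i := by
      rw [Finset.sum_eq_single i]
      · exact Set.indicator_of_mem hi _
      · intro j _ hj
        exact Set.indicator_of_notMem (fun hjx => hj (Vcell_unique hbad hjx hi)) _
      · intro h; exact absurd (Finset.mem_univ i) h
    rw [hsum, mv_eq_of_mem hi]
    have hle := mv_le s φ i x
    simp only [fv] at hle ⊢
    linarith
  · push_neg at hex
    rw [mv_zero_of_no_cell hx hex]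
    have hsum : ∑ j, Set.indicator (Vcell D s ψ j) (fun _ => φ j - ψ j) x = 0 :=
      Finset.sum_eq_zero fun j _ => Set.indicator_of_notMem (hex j) _
    rw [hsum]
    simpa using mv_nonpos s φ x

lemma eventually_mem (hbad : x ∉ Bad s ψ) {i : Fin N} (hi : x ∈ Vcell D s ψ i) :
    ∀ᶠ φ in nhds ψ, x ∈ Vcell D s φ i := by
  rw [mem_Vcell_iff] at hi
  obtain ⟨hxD, hle, hle0⟩ := hi
  have hca : ∀ j : Fin N, ContinuousAt (fun φ : Fin N → ℝ => fv s φ j x) ψ :=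
    fun j => (continuous_const.sub (continuous_apply j)).continuousAt
  have hA : ∀ᶠ φ in nhds ψ, ∀ j : Fin N, j ≠ i → fv s φ i x < fv s φ j x := by
    rw [Filter.eventually_all]
    intro j
    rcases eq_or_ne j i with rfl | hj
    · exact Filter.Eventually.of_forall fun φ h => absurd rfl h
    · have hstrict : fv s ψ i x < fv s ψ j x := by
        refine lt_of_le_of_ne (hle j) fun h => ?_
        exact hbad (Or.inl (Set.mem_iUnion.2 ⟨i, Set.mem_iUnion.2 ⟨j, ⟨Ne.symm hj, h⟩⟩⟩))
      exact ((hca i).eventually_lt (hca j) hstrict).mono fun φ h _ => h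
  have hB : ∀ᶠ φ in nhds ψ, fv s φ i x < 0 := by
    have h0 : fv s ψ i x < 0 := lt_of_le_of_ne hle0 (not_bad_sphere hbad i)
    exact (hca i).eventually_lt continuousAt_const h0
  filter_upwards [hA, hB] with φ h1 h2
  refine mem_Vcell_iff.2 ⟨hxD, fun j => ?_, le_of_lt h2⟩
  rcases eq_or_ne j i with rfl | hj
  · exact le_refl _
  · exact le_of_lt (h1 j hj)

lemma eventually_not_mem (hxD : x ∈ closure D) {i : Fin N} (hi : x ∉ Vcell D s ψ i) :
    ∀ᶠ φ in nhds ψ, x ∉ Vcell D s φ i := by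
  have hca : ∀ j : Fin N, ContinuousAt (fun φ : Fin N → ℝ => fv s φ j x) ψ :=
    fun j => (continuous_const.sub (continuous_apply j)).continuousAt
  rw [mem_Vcell_iff] at hi
  push_neg at hi
  rcases Classical.em (∀ j, fv s ψ i x ≤ fv s ψ j x) with hall | hnall
  · -- then the failure is fv i > 0
    have h0 : 0 < fv s ψ i x := by
      rcases lt_or_ge 0 (fv s ψ i x) with h | h
      · exact h
      · exact absurd (hi hxD hall) (not_lt.2 h)
    have := (continuousAt_const (y := (0:ℝ)) (x := ψ)).eventually_lt (hca i) h0
    filter_upwards [this] with φ h hmem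
    have := (mem_Vcell_iff.1 hmem).2.2
    linarith
  · push_neg at hnall
    obtain ⟨j, hj⟩ := hnall
    have := (hca j).eventually_lt (hca i) hj
    filter_upwards [this] with φ h hmem
    have := (mem_Vcell_iff.1 hmem).2.1 j
    linarith


section Integrals

lemma integrableOn_fv (hK : IsCompact (closure D)) (i : Fin N) :
    IntegrableOn (fv s ψ i) (closure D) volume :=
  ContinuousOn.integrableOn_compact hK
    ((((continuous_id.sub continuous_const).norm.pow 2).sub continuous_const).continuousOn)

lemma integrableOn_mv (hK : IsCompact (closure D)) :
    IntegrableOn (mv s ψ) (closure D) volume :=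
  ContinuousOn.integrableOn_compact hK (continuous_mv s ψ).continuousOn

lemma setInt_ind (i : Fin N) (g : Esp d → ℝ) :
    ∫ x in closure D, Set.indicator (Vcell D s ψ i) g x = ∫ x in Vcell D s ψ i, g x := by
  rw [setIntegral_indicator (measurableSet_Vcell i),
    Set.inter_eq_self_of_subset_right Vcell_subset_closure]

lemma vol_eq_integral (i : Fin N) :
    (volume (Vcell D s ψ i)).toReal
      = ∫ x in closure D, Set.indicator (Vcell D s ψ i) (fun _ => (1 : ℝ)) x := by
  rw [setInt_ind, setIntegral_const, smul_eq_mul, mul_one]; rfl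

lemma const_ind_integral (i : Fin N) (c : ℝ) :
    ∫ x in closure D, Set.indicator (Vcell D s ψ i) (fun _ => c) x
      = c * (volume (Vcell D s ψ i)).toReal := by
  rw [setInt_ind, setIntegral_const, smul_eq_mul, mul_comm]; rfl

lemma ae_good (hd : 1 ≤ d) (hs : Function.Injective s) (ψ : Fin N → ℝ) :
    ∀ᵐ x ∂(volume.restrict (closure D)), x ∉ Bad s ψ ∧ x ∈ closure D := by
  filter_upwards [ae_restrict_of_ae (measure_eq_zero_iff_ae_notMem.mp (bad_null hd hs ψ)),
    ae_restrict_mem isClosed_closure.measurableSet] with x h1 h2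
  exact ⟨h1, h2⟩

lemma K_eq (hd : 1 ≤ d) (hs : Function.Injective s) (hK : IsCompact (closure D))
    (ν : Fin N → ℝ) :
    Kfun D s ν ψ = (∫ x in closure D, mv s ψ x) + ∑ i, ν i * ψ i := by
  rw [Kfun]
  congr 1
  calc ∑ i, ∫ x in Vcell D s ψ i, (‖x - s i‖ ^ 2 - ψ i)
      = ∑ i, ∫ x in closure D, Set.indicator (Vcell D s ψ i) (fv s ψ i) x := by
        refine Finset.sum_congr rfl fun i _ => ?_
        rw [setInt_ind i (fv s ψ i)]; rfl
    _ = ∫ x in closure D, ∑ i, Set.indicator (Vcell D s ψ i) (fv s ψ i) x := by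
        rw [integral_finset_sum]
        exact fun i _ => (integrableOn_fv hK i).indicator (measurableSet_Vcell i)
    _ = ∫ x in closure D, mv s ψ x := by
        refine integral_congr_ae ?_
        filter_upwards [ae_good hd hs ψ] with x hx
        exact (mv_eq_sum hx.2 hx.1).symm

lemma K_super (hd : 1 ≤ d) (hs : Function.Injective s) (hK : IsCompact (closure D))
    (ν ψ φ : Fin N → ℝ) :
    Kfun D s ν φ ≤ Kfun D s ν ψ
      + ∑ i, (ν i - (volume (Vcell D s ψ i)).toReal) * (φ i - ψ i) := by
  rw [K_eq hd hs hK ν, K_eq hd hs hK ν]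
  have hint1 : IntegrableOn (mv s φ) (closure D) volume := integrableOn_mv hK
  have hint2 : IntegrableOn (mv s ψ) (closure D) volume := integrableOn_mv hK
  have hintind : ∀ i : Fin N,
      IntegrableOn (Set.indicator (Vcell D s ψ i) (fun _ => φ i - ψ i)) (closure D) volume :=
    fun i => (integrableOn_const hK.measure_lt_top.ne).indicator (measurableSet_Vcell i)
  have hintsum : IntegrableOn
      (fun x => ∑ i, Set.indicator (Vcell D s ψ i) (fun _ => φ i - ψ i) x)
      (closure D) volume := integrable_finset_sum _ fun i _ => hintind i
  have hmono : ∫ x in closure D, mv s φ x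
      ≤ ∫ x in closure D,
          (mv s ψ x - ∑ i, Set.indicator (Vcell D s ψ i) (fun _ => φ i - ψ i) x) := by
    refine integral_mono_ae hint1 (hint2.sub hintsum) ?_
    filter_upwards [ae_good hd hs ψ] with x hx
    exact mv_super hx.2 hx.1 φ
  have hsplit : ∫ x in closure D,
        (mv s ψ x - ∑ i, Set.indicator (Vcell D s ψ i) (fun _ => φ i - ψ i) x)
      = (∫ x in closure D, mv s ψ x)
        - ∑ i, (φ i - ψ i) * (volume (Vcell D s ψ i)).toReal := by
    rw [integral_sub hint2 hintsum, integral_finset_sum _ fun i _ => hintind i]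
    congr 1
    exact Finset.sum_congr rfl fun i _ => const_ind_integral i _
  rw [hsplit] at hmono
  have halg : ∑ i, ν i * φ i - ∑ i, ν i * ψ i
      - ∑ i, (ν i - (volume (Vcell D s ψ i)).toReal) * (φ i - ψ i)
      = ∑ i, (φ i - ψ i) * (volume (Vcell D s ψ i)).toReal := by
    rw [← Finset.sum_sub_distrib, ← Finset.sum_sub_distrib]
    exact Finset.sum_congr rfl fun i _ => by ring
  linarith

lemma vol_tendsto (hd : 1 ≤ d) (hs : Function.Injective s) (hK : IsCompact (closure D))
    (ψ : Fin N → ℝ) (i : Fin N) :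
    Filter.Tendsto (fun φ : Fin N → ℝ => (volume (Vcell D s φ i)).toReal) (nhds ψ)
      (nhds ((volume (Vcell D s ψ i)).toReal)) := by
  have hrw : ∀ φ : Fin N → ℝ, (volume (Vcell D s φ i)).toReal
      = ∫ x in closure D, Set.indicator (Vcell D s φ i) (fun _ => (1 : ℝ)) x :=
    fun φ => vol_eq_integral i
  rw [hrw]
  refine Filter.Tendsto.congr (fun φ => (hrw φ).symm) ?_
  refine tendsto_integral_filter_of_dominated_convergence (fun _ => (1 : ℝ)) ?_ ?_ ?_ ?_
  · exact Filter.Eventually.of_forall fun φ =>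
      (stronglyMeasurable_const.indicator (measurableSet_Vcell i)).aestronglyMeasurable
  · refine Filter.Eventually.of_forall fun φ => Filter.Eventually.of_forall fun x => ?_
    by_cases hx : x ∈ Vcell D s φ i <;>
      simp [Set.indicator_of_mem, Set.indicator_of_notMem, hx]
  · exact integrableOn_const hK.measure_lt_top.ne
  · filter_upwards [ae_good hd hs ψ] with x hx
    obtain ⟨hb, hD⟩ := hx
    by_cases hmem : x ∈ Vcell D s ψ i
    · rw [Set.indicator_of_mem hmem]
      refine Filter.Tendsto.congr' ?_ tendsto_const_nhds
      filter_upwards [eventually_mem hb hmem] with φ hφ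
      exact (Set.indicator_of_mem hφ (fun _ => (1:ℝ))).symm
    · rw [Set.indicator_of_notMem hmem]
      refine Filter.Tendsto.congr' ?_ tendsto_const_nhds
      filter_upwards [eventually_not_mem hD hmem] with φ hφ
      exact (Set.indicator_of_notMem hφ (fun _ => (1:ℝ))).symm

end Integrals

end Stmt2Aux

/-- The Kantorovich functional is concave and everywhere differentiable in the weights,
with gradient `F(s, ν, ψ)_i = ν_i - vol(V_i(s, ψ))`. -/
theorem stmt2 {d N : ℕ} (hd : 1 ≤ d)
    (D : Set (EuclideanSpace ℝ (Fin d)))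
    (hDo : IsOpen D) (hDb : Bornology.IsBounded D)
    (s : Fin N → EuclideanSpace ℝ (Fin d)) (hs : Function.Injective s)
    (ν : Fin N → ℝ) :
    ConcaveOn ℝ Set.univ (fun ψ : Fin N → ℝ => Kfun D s ν ψ) ∧
    ∀ ψ : Fin N → ℝ, ∃ L : (Fin N → ℝ) →L[ℝ] ℝ,
      (∀ h : Fin N → ℝ, L h = ∑ i, (ν i - (volume (Vcell D s ψ i)).toReal) * h i) ∧
      HasFDerivAt (fun φ : Fin N → ℝ => Kfun D s ν φ) L ψ := by
  classical
  have hK : IsCompact (closure D) := hDb.isCompact_closure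
  have hsuper : ∀ ψ φ : Fin N → ℝ, Kfun D s ν φ ≤ Kfun D s ν ψ
      + ∑ i, (ν i - (volume (Vcell D s ψ i)).toReal) * (φ i - ψ i) :=
    fun ψ φ => Stmt2Aux.K_super hd hs hK ν ψ φ
  constructor
  · refine ⟨convex_univ, ?_⟩
    intro x _ y _ a b ha hb hab
    set z := a • x + b • y with hz
    set g : Fin N → ℝ := fun i => ν i - (volume (Vcell D s z i)).toReal with hg
    have h1 : Kfun D s ν x ≤ Kfun D s ν z + ∑ i, g i * (x i - z i) := hsuper z x
    have h2 : Kfun D s ν y ≤ Kfun D s ν z + ∑ i, g i * (y i - z i) := hsuper z y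
    have hzero : a * (∑ i, g i * (x i - z i)) + b * (∑ i, g i * (y i - z i)) = 0 := by
      rw [Finset.mul_sum, Finset.mul_sum, ← Finset.sum_add_distrib]
      refine Finset.sum_eq_zero fun i _ => ?_
      have hzi : z i = a * x i + b * y i := rfl
      have hab' : b = 1 - a := by linarith
      rw [hzi, hab']; ring
    have e1 : a * (Kfun D s ν z + ∑ i, g i * (x i - z i))
        = a * Kfun D s ν z + a * ∑ i, g i * (x i - z i) := mul_add _ _ _
    have e2 : b * (Kfun D s ν z + ∑ i, g i * (y i - z i))
        = b * Kfun D s ν z + b * ∑ i, g i * (y i - z i) := mul_add _ _ _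
    have e3 : a * Kfun D s ν z + b * Kfun D s ν z = Kfun D s ν z := by
      rw [← add_mul, hab, one_mul]
    have m1 := mul_le_mul_of_nonneg_left h1 ha
    have m2 := mul_le_mul_of_nonneg_left h2 hb
    simp only [smul_eq_mul]
    linarith
  · intro ψ
    set c : Fin N → ℝ := fun i => ν i - (volume (Vcell D s ψ i)).toReal with hc
    set L : (Fin N → ℝ) →L[ℝ] ℝ :=
      ∑ i, c i • (ContinuousLinearMap.proj i : (Fin N → ℝ) →L[ℝ] ℝ) with hL
    have hLapp : ∀ h : Fin N → ℝ, L h = ∑ i, c i * h i := by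
      intro h
      rw [hL]
      simp [ContinuousLinearMap.sum_apply, ContinuousLinearMap.smul_apply,
        ContinuousLinearMap.proj_apply, smul_eq_mul]
    refine ⟨L, fun h => hLapp h, ?_⟩
    rw [hasFDerivAt_iff_isLittleO_nhds_zero, Asymptotics.isLittleO_iff]
    intro ε hε
    have htψ : Filter.Tendsto (fun h : Fin N → ℝ => ψ + h) (nhds 0) (nhds ψ) := by
      simpa using (tendsto_const_nhds.add Filter.tendsto_id :
        Filter.Tendsto (fun h : Fin N → ℝ => ψ + h) (nhds 0) (nhds (ψ + 0)))
    have htend : Filter.Tendsto (fun h : Fin N → ℝ =>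
        ∑ i, |(volume (Vcell D s (ψ + h) i)).toReal - (volume (Vcell D s ψ i)).toReal|)
        (nhds 0) (nhds 0) := by
      have hone : ∀ i : Fin N, Filter.Tendsto (fun h : Fin N → ℝ =>
          |(volume (Vcell D s (ψ + h) i)).toReal - (volume (Vcell D s ψ i)).toReal|)
          (nhds 0) (nhds 0) := by
        intro i
        have hcomp := (Stmt2Aux.vol_tendsto hd hs hK ψ i).comp htψ
        have hsub := hcomp.sub (tendsto_const_nhds
          (x := (volume (Vcell D s ψ i)).toReal) (f := nhds (0 : Fin N → ℝ)))
        rw [sub_self] at hsub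
        simpa [Function.comp] using hsub.abs
      have hall := tendsto_finset_sum Finset.univ (fun i (_ : i ∈ Finset.univ) => hone i)
      simpa using hall
    filter_upwards [htend.eventually (gt_mem_nhds hε)] with h hh
    rw [hLapp h]
    set c' : Fin N → ℝ := fun i => ν i - (volume (Vcell D s (ψ + h) i)).toReal with hc'
    have hsubi : ∀ i : Fin N, (ψ + h) i - ψ i = h i := fun i => by
      simp [Pi.add_apply]
    have hup : Kfun D s ν (ψ + h) ≤ Kfun D s ν ψ + ∑ i, c i * h i := by
      have := hsuper ψ (ψ + h)
      have hrw : ∑ i, (ν i - (volume (Vcell D s ψ i)).toReal) * ((ψ + h) i - ψ i)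
          = ∑ i, c i * h i :=
        Finset.sum_congr rfl fun i _ => by rw [hsubi i]
      linarith [hrw ▸ this]
    have hlow : Kfun D s ν ψ ≤ Kfun D s ν (ψ + h) - ∑ i, c' i * h i := by
      have hh2 := hsuper (ψ + h) ψ
      have hrw : ∑ i, (ν i - (volume (Vcell D s (ψ + h) i)).toReal) * (ψ i - (ψ + h) i)
          = -∑ i, c' i * h i := by
        rw [← Finset.sum_neg_distrib]
        refine Finset.sum_congr rfl fun i _ => ?_
        have e : ψ i - (ψ + h) i = -h i := by have := hsubi i; linarith
        have e2 : c' i = ν i - (volume (Vcell D s (ψ + h) i)).toReal := rfl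
        rw [e, e2]
        ring
      rw [hrw] at hh2
      linarith
    -- error term bounds
    set A : ℝ := Kfun D s ν (ψ + h) - Kfun D s ν ψ - ∑ i, c i * h i with hA
    have hAup : A ≤ 0 := by rw [hA]; linarith
    have hAlow : ∑ i, (c' i - c i) * h i ≤ A := by
      rw [hA]
      have : ∑ i, (c' i - c i) * h i = ∑ i, c' i * h i - ∑ i, c i * h i := by
        rw [← Finset.sum_sub_distrib]
        exact Finset.sum_congr rfl fun i _ => by ring
      rw [this]
      linarith
    have hBabs : |∑ i, (c' i - c i) * h i| ≤ ε * ‖h‖ := by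
      refine le_trans (Finset.abs_sum_le_sum_abs _ _) ?_
      have hterm : ∀ i : Fin N, |(c' i - c i) * h i|
          ≤ |(volume (Vcell D s (ψ + h) i)).toReal - (volume (Vcell D s ψ i)).toReal| * ‖h‖ := by
        intro i
        rw [abs_mul]
        have e2 : c' i = ν i - (volume (Vcell D s (ψ + h) i)).toReal := rfl
        have e3 : c i = ν i - (volume (Vcell D s ψ i)).toReal := rfl
        have h1 : c' i - c i
            = -((volume (Vcell D s (ψ + h) i)).toReal - (volume (Vcell D s ψ i)).toReal) := by
          rw [e2, e3]; ring
        rw [h1, abs_neg]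
        refine mul_le_mul_of_nonneg_left ?_ (abs_nonneg _)
        have := norm_le_pi_norm h i
        simpa [Real.norm_eq_abs] using this
      refine le_trans (Finset.sum_le_sum fun i _ => hterm i) ?_
      rw [← Finset.sum_mul]
      exact mul_le_mul_of_nonneg_right (le_of_lt hh) (norm_nonneg _)
    rw [Real.norm_eq_abs, abs_le]
    have habs := abs_le.1 hBabs
    constructor
    · linarith
    · have : (0:ℝ) ≤ ε * ‖h‖ := mul_nonneg (le_of_lt hε) (norm_nonneg _)
      linarith
end
end

section
/- Let d ≥ 1, let D ⊆ ℝ^d be a bounded open set, let s_1, …, s_N ∈ ℝ^d be pairwise distinct, and let ν ∈ ℝ^N. Then for all weight vectors ψ, φ ∈ ℝ^N the supergradient inequality holds: K(s,ν,φ) ≤ K(s,ν,ψ) + Σ_{i=1}^N (ν_i − vol(V_i(s,ψ))) (φ_i − ψ_i). -/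
open MeasureTheory Set

noncomputable section

/-- A perpendicular bisector (of a weighted power diagram) is Lebesgue null. -/
lemma bisector_null {d : ℕ} (a b : EuclideanSpace ℝ (Fin d)) (hab : a ≠ b) (α β : ℝ) :
    volume {x : EuclideanSpace ℝ (Fin d) | ‖x - a‖ ^ 2 - α = ‖x - b‖ ^ 2 - β} = 0 := by
  set v : EuclideanSpace ℝ (Fin d) := b - a with hv_def
  have hv : v ≠ 0 := sub_ne_zero.2 (Ne.symm hab)
  set r : ℝ := (α - β - ‖a‖ ^ 2 + ‖b‖ ^ 2) / 2 with hr_def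
  have hset : {x : EuclideanSpace ℝ (Fin d) | ‖x - a‖ ^ 2 - α = ‖x - b‖ ^ 2 - β}
      = {x | (inner ℝ v x : ℝ) = r} := by
    ext x
    have h1 : ‖x - a‖ ^ 2 = ‖x‖ ^ 2 - 2 * (inner ℝ x a : ℝ) + ‖a‖ ^ 2 := norm_sub_sq_real x a
    have h2 : ‖x - b‖ ^ 2 = ‖x‖ ^ 2 - 2 * (inner ℝ x b : ℝ) + ‖b‖ ^ 2 := norm_sub_sq_real x b
    have h3 : (inner ℝ v x : ℝ) = (inner ℝ x b : ℝ) - (inner ℝ x a : ℝ) := by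
      rw [hv_def, real_inner_comm, inner_sub_right]
    simp only [mem_setOf_eq]
    constructor <;> intro h <;> rw [hr_def] at * <;> nlinarith [h1, h2, h3]
  rw [hset]
  set K : Submodule ℝ (EuclideanSpace ℝ (Fin d)) := LinearMap.ker (innerSL ℝ v).toLinearMap with hK_def
  have hvK : v ∉ K := by
    intro h
    have : (inner ℝ v v : ℝ) = 0 := h
    rw [real_inner_self_eq_norm_sq] at this
    exact hv (by simpa using norm_eq_zero.1 (by nlinarith [norm_nonneg v]))
  have hKne : K ≠ ⊤ := fun h => hvK (h ▸ Submodule.mem_top)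
  set x₀ : EuclideanSpace ℝ (Fin d) := (r / ‖v‖ ^ 2) • v with hx0_def
  have hx0 : (inner ℝ v x₀ : ℝ) = r := by
    rw [hx0_def, inner_smul_right, real_inner_self_eq_norm_sq]
    have : ‖v‖ ≠ 0 := norm_ne_zero_iff.2 hv
    field_simp
  have hpre : {x : EuclideanSpace ℝ (Fin d) | (inner ℝ v x : ℝ) = r}
      = (fun x => x + (-x₀)) ⁻¹' (K : Set (EuclideanSpace ℝ (Fin d))) := by
    ext x
    simp only [mem_setOf_eq, mem_preimage, SetLike.mem_coe, hK_def, LinearMap.mem_ker]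
    constructor <;> intro h
    · show (inner ℝ v (x + -x₀) : ℝ) = 0
      rw [inner_add_right, inner_neg_right, hx0, h]; ring
    · have h' : (inner ℝ v (x + -x₀) : ℝ) = 0 := h
      rw [inner_add_right, inner_neg_right, hx0] at h'
      linarith
  rw [hpre, measure_preimage_add_right]
  exact Measure.addHaar_submodule volume K hKne

lemma Vcell_isClosed {d N : ℕ} (D : Set (EuclideanSpace ℝ (Fin d)))
    (s : Fin N → EuclideanSpace ℝ (Fin d)) (ψ : Fin N → ℝ) (i : Fin N) :
    IsClosed (Vcell D s ψ i) := by
  have hg : ∀ (a : EuclideanSpace ℝ (Fin d)) (c : ℝ),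
      Continuous fun x : EuclideanSpace ℝ (Fin d) => ‖x - a‖ ^ 2 - c := by
    intro a c; fun_prop
  have hLag : IsClosed (Lag D s ψ i) := by
    have : Lag D s ψ i = closure D ∩ ⋂ j : Fin N,
        {x | j ≠ i → ‖x - s i‖ ^ 2 - ψ i ≤ ‖x - s j‖ ^ 2 - ψ j} := by
      ext x; simp [Lag, mem_iInter]
    rw [this]
    refine isClosed_closure.inter (isClosed_iInter fun j => ?_)
    by_cases hji : j = i
    · simp [hji]
    · have : {x : EuclideanSpace ℝ (Fin d) |
          j ≠ i → ‖x - s i‖ ^ 2 - ψ i ≤ ‖x - s j‖ ^ 2 - ψ j}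
          = {x | ‖x - s i‖ ^ 2 - ψ i ≤ ‖x - s j‖ ^ 2 - ψ j} := by
        ext x; simp [hji]
      rw [this]
      exact isClosed_le (hg (s i) (ψ i)) (hg (s j) (ψ j))
  refine hLag.inter ?_
  have : {x : EuclideanSpace ℝ (Fin d) | ‖x - s i‖ ^ 2 ≤ ψ i}
      = {x | ‖x - s i‖ ^ 2 - ψ i ≤ 0} := by ext x; simp [sub_nonpos]
  rw [this]
  exact isClosed_le (hg (s i) (ψ i)) continuous_const

/-- Supergradient inequality for the Kantorovich functional. -/
theorem stmt3 {d N : ℕ} (hd : 1 ≤ d)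
    (D : Set (EuclideanSpace ℝ (Fin d)))
    (hDo : IsOpen D) (hDb : Bornology.IsBounded D)
    (s : Fin N → EuclideanSpace ℝ (Fin d)) (hs : Function.Injective s)
    (ν : Fin N → ℝ) (ψ φ : Fin N → ℝ) :
    Kfun D s ν φ ≤ Kfun D s ν ψ +
      ∑ i, (ν i - (volume (Vcell D s ψ i)).toReal) * (φ i - ψ i) := by
  rcases Nat.eq_zero_or_pos N with hN0 | hN0
  · subst hN0; simp [Kfun]
  have : NeZero N := ⟨hN0.ne'⟩
  -- basic compactness facts
  have hKcl : IsCompact (closure D) :=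
    Metric.isCompact_of_isClosed_isBounded isClosed_closure hDb.closure
  have hVsub : ∀ (w : Fin N → ℝ) i, Vcell D s w i ⊆ closure D := fun w i x hx => hx.1.1
  have hVcomp : ∀ (w : Fin N → ℝ) i, IsCompact (Vcell D s w i) := fun w i =>
    hKcl.of_isClosed_subset (Vcell_isClosed D s w i) (hVsub w i)
  have hVmeas : ∀ (w : Fin N → ℝ) i, MeasurableSet (Vcell D s w i) := fun w i =>
    (Vcell_isClosed D s w i).measurableSet
  -- the function F
  have hne : (Finset.univ : Finset (Fin N)).Nonempty := Finset.univ_nonempty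
  set g : Fin N → EuclideanSpace ℝ (Fin d) → ℝ := fun i x => ‖x - s i‖ ^ 2 - φ i with hg_def
  have hgcont : ∀ i, Continuous (g i) := by intro i; rw [hg_def]; fun_prop
  set F : EuclideanSpace ℝ (Fin d) → ℝ := fun x => min 0 (Finset.univ.inf' hne fun i => g i x) with hF_def
  have hFcont : Continuous F :=
    continuous_const.min (Continuous.finset_inf'_apply hne fun i _ => hgcont i)
  have hFle0 : ∀ x, F x ≤ 0 := fun x => min_le_left _ _
  have hFle : ∀ i x, F x ≤ g i x := fun i x =>
    le_trans (min_le_right _ _) (Finset.inf'_le _ (Finset.mem_univ i))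
  have hFeq : ∀ i x, x ∈ Vcell D s φ i → F x = g i x := by
    intro i x hx
    obtain ⟨⟨hxcl, hxmin⟩, hxball⟩ := hx
    have hgi0 : g i x ≤ 0 := by simpa [hg_def, sub_nonpos] using hxball
    have hmin : ∀ j, g i x ≤ g j x := by
      intro j
      by_cases hji : j = i
      · subst hji; exact le_refl _
      · exact hxmin j hji
    have hinf : (Finset.univ.inf' hne fun j => g j x) = g i x :=
      le_antisymm (Finset.inf'_le _ (Finset.mem_univ i))
        (Finset.le_inf' _ _ fun j _ => hmin j)
    have hFx : F x = min 0 (Finset.univ.inf' hne fun j => g j x) := rfl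
    rw [hFx, hinf]
    exact min_eq_right hgi0
  -- integrability
  have hFint : ∀ (K : Set (EuclideanSpace ℝ (Fin d))), IsCompact K → IntegrableOn F K volume := fun K hK =>
    hFcont.continuousOn.integrableOn_compact hK
  have hgint : ∀ i (w : Fin N → ℝ) j, IntegrableOn (g i) (Vcell D s w j) volume := fun i w j =>
    (hgcont i).continuousOn.integrableOn_compact (hVcomp w j)
  -- a.e. disjointness of cells
  have hdisj : ∀ (w : Fin N → ℝ),
      Pairwise (Function.onFun (AEDisjoint volume) fun i => Vcell D s w i) := by
    intro w i j hij
    refine measure_mono_null ?_ (bisector_null (s i) (s j) (fun h => hij (hs h)) (w i) (w j))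
    rintro x ⟨hxi, hxj⟩
    have h1 : ‖x - s i‖ ^ 2 - w i ≤ ‖x - s j‖ ^ 2 - w j := hxi.1.2 j (Ne.symm hij)
    have h2 : ‖x - s j‖ ^ 2 - w j ≤ ‖x - s i‖ ^ 2 - w i := hxj.1.2 i hij
    exact le_antisymm h1 h2
  -- integral over union of cells
  have hUnion : ∀ (w : Fin N → ℝ),
      ∫ x in ⋃ i, Vcell D s w i, F x = ∑ i, ∫ x in Vcell D s w i, F x := by
    intro w
    rw [integral_iUnion_ae (fun i => (hVmeas w i).nullMeasurableSet) (hdisj w)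
      (hFint _ (isCompact_iUnion fun i => hVcomp w i)), tsum_fintype]
  have hUsub : ∀ (w : Fin N → ℝ), (⋃ i, Vcell D s w i) ⊆ closure D := fun w =>
    iUnion_subset fun i => hVsub w i
  have hUmeas : ∀ (w : Fin N → ℝ), MeasurableSet (⋃ i, Vcell D s w i) := fun w =>
    MeasurableSet.iUnion fun i => hVmeas w i
  -- F vanishes on closure D minus the union of the φ-cells
  have hFzero : ∀ x ∈ closure D \ ⋃ i, Vcell D s φ i, F x = 0 := by
    rintro x ⟨hxcl, hxU⟩
    have hFx : F x = min 0 (Finset.univ.inf' hne fun j => g j x) := rfl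
    rcases le_or_gt 0 (Finset.univ.inf' hne fun j => g j x) with h | h
    · rw [hFx]; exact min_eq_left h
    · exfalso
      obtain ⟨i, _, hi⟩ := Finset.exists_mem_eq_inf' hne fun j => g j x
      have hgilt : g i x < 0 := hi ▸ h
      have hgilt' : ‖x - s i‖ ^ 2 - φ i < 0 := hgilt
      have hmem : x ∈ Vcell D s φ i := by
        refine ⟨⟨hxcl, fun j _ => ?_⟩, ?_⟩
        · have hj : g i x ≤ g j x := hi ▸ Finset.inf'_le _ (Finset.mem_univ j)
          exact hj
        · simp only [mem_setOf_eq]; linarith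
      exact hxU (mem_iUnion.2 ⟨i, hmem⟩)
  -- split closure D
  have hsplit : ∀ (w : Fin N → ℝ), ∫ x in closure D, F x =
      (∫ x in ⋃ i, Vcell D s w i, F x) + ∫ x in closure D \ ⋃ i, Vcell D s w i, F x := by
    intro w
    rw [← setIntegral_union disjoint_sdiff_right ((hKcl.isClosed.measurableSet).diff (hUmeas w))
      (hFint _ (isCompact_iUnion fun i => hVcomp w i))
      ((hFint _ hKcl).mono_set diff_subset), union_diff_cancel (hUsub w)]
  -- key chain of (in)equalities
  have key : ∑ i, ∫ x in Vcell D s φ i, g i x ≤ ∑ i, ∫ x in Vcell D s ψ i, g i x := by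
    calc ∑ i, ∫ x in Vcell D s φ i, g i x
        = ∑ i, ∫ x in Vcell D s φ i, F x := by
          refine Finset.sum_congr rfl fun i _ => ?_
          exact setIntegral_congr_fun (hVmeas φ i) fun x hx => (hFeq i x hx).symm
      _ = ∫ x in ⋃ i, Vcell D s φ i, F x := (hUnion φ).symm
      _ = ∫ x in closure D, F x := by
          rw [hsplit φ, setIntegral_congr_fun ((hKcl.isClosed.measurableSet).diff (hUmeas φ))
            (fun x hx => hFzero x hx), integral_zero, add_zero]
      _ ≤ ∫ x in ⋃ i, Vcell D s ψ i, F x := by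
          rw [hsplit ψ]
          have : ∫ x in closure D \ ⋃ i, Vcell D s ψ i, F x ≤ 0 :=
            integral_nonpos fun x => hFle0 x
          linarith
      _ = ∑ i, ∫ x in Vcell D s ψ i, F x := hUnion ψ
      _ ≤ ∑ i, ∫ x in Vcell D s ψ i, g i x := by
          refine Finset.sum_le_sum fun i _ => ?_
          exact setIntegral_mono_on (hFint _ (hVcomp ψ i)) (hgint i ψ i) (hVmeas ψ i)
            fun x _ => hFle i x
  -- rewrite the ψ-side integrals
  have hshift : ∀ i, ∫ x in Vcell D s ψ i, g i x =
      (∫ x in Vcell D s ψ i, (‖x - s i‖ ^ 2 - ψ i)) -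
        (volume (Vcell D s ψ i)).toReal * (φ i - ψ i) := by
    intro i
    have hint1 : IntegrableOn (fun x => ‖x - s i‖ ^ 2 - ψ i) (Vcell D s ψ i) volume := by
      exact (by fun_prop : Continuous fun x : EuclideanSpace ℝ (Fin d) => ‖x - s i‖ ^ 2 - ψ i).continuousOn.integrableOn_compact
        (hVcomp ψ i)
    have hint2 : IntegrableOn (fun _ : EuclideanSpace ℝ (Fin d) => ψ i - φ i) (Vcell D s ψ i) volume :=
      integrableOn_const (hVcomp ψ i).measure_lt_top.ne
    have : ∀ x : EuclideanSpace ℝ (Fin d), g i x = (‖x - s i‖ ^ 2 - ψ i) + (ψ i - φ i) := by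
      intro x; rw [hg_def]; ring
    rw [show (fun x => g i x) = fun x => (‖x - s i‖ ^ 2 - ψ i) + (ψ i - φ i) from funext this]
    rw [integral_add hint1 hint2, setIntegral_const]
    simp only [smul_eq_mul, measureReal_def]
    ring
  -- assemble
  simp only [Kfun]
  have e1 : ∑ i, ∫ x in Vcell D s ψ i, g i x =
      (∑ i, ∫ x in Vcell D s ψ i, (‖x - s i‖ ^ 2 - ψ i)) -
        ∑ i, (volume (Vcell D s ψ i)).toReal * (φ i - ψ i) := by
    rw [← Finset.sum_sub_distrib]
    exact Finset.sum_congr rfl fun i _ => hshift i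
  have e2 : ∑ i, (ν i - (volume (Vcell D s ψ i)).toReal) * (φ i - ψ i) =
      (∑ i, ν i * φ i) - (∑ i, ν i * ψ i) -
        ∑ i, (volume (Vcell D s ψ i)).toReal * (φ i - ψ i) := by
    rw [← Finset.sum_sub_distrib, ← Finset.sum_sub_distrib]
    exact Finset.sum_congr rfl fun i _ => by ring
  have key' : ∑ i, ∫ x in Vcell D s φ i, g i x ≤
      (∑ i, ∫ x in Vcell D s ψ i, (‖x - s i‖ ^ 2 - ψ i)) -
        ∑ i, (volume (Vcell D s ψ i)).toReal * (φ i - ψ i) := e1 ▸ key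
  have hLHS : ∑ i, ∫ x in Vcell D s φ i, (‖x - s i‖ ^ 2 - φ i) =
      ∑ i, ∫ x in Vcell D s φ i, g i x := rfl
  rw [hLHS, e2]
  linarith [key']
end
end

section
/- Let d ≥ 1, let D ⊆ ℝ^d be a bounded open set, let s_1, …, s_N ∈ ℝ^d be pairwise distinct and let ψ ∈ ℝ^N. Set U := ⋃_{i=1}^N V_i(s,ψ), let μ' be the Lebesgue measure restricted to U, and let ν' := Σ_{i=1}^N vol(V_i(s,ψ))·δ_{s_i} be the discrete measure on ℝ^d with mass vol(V_i(s,ψ)) at s_i. Then for every finite measure π on ℝ^d × ℝ^d whose first marginal is μ' and whose second marginal is ν', one has ∫_{ℝ^d×ℝ^d} |x − y|² dπ(x,y) ≥ Σ_{i=1}^N ∫_{V_i(s,ψ)} |x − s_i|² dx. In other words, the map sending almost every point of V_i(s,ψ) to s_i is an optimal transport map for the quadratic cost between μ' and ν'. -/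
open MeasureTheory

noncomputable section

/-- A hyperplane has Lebesgue (Haar) measure zero. -/
lemma volume_hyperplane {E : Type*} [NormedAddCommGroup E] [InnerProductSpace ℝ E]
    [FiniteDimensional ℝ E] [MeasurableSpace E] [BorelSpace E]
    (μ : Measure E) [μ.IsAddHaarMeasure] (v : E) (hv : v ≠ 0) (c : ℝ) :
    μ {x | (inner ℝ x v : ℝ) = c} = 0 := by
  set f : E →ₗ[ℝ] ℝ := (innerSL ℝ v).toLinearMap with hf
  have hset : {x | (inner ℝ x v : ℝ) = c} = (AffineSubspace.comap f.toAffineMap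
      (AffineSubspace.mk' c (⊥ : Submodule ℝ ℝ)) : Set E) := by
    ext x
    simp [AffineSubspace.mem_comap, AffineSubspace.mem_mk', hf, real_inner_comm,
      sub_eq_zero]
  rw [hset]
  apply Measure.addHaar_affineSubspace μ _
  intro htop
  have h1 : ((c + 1)/‖v‖^2) • v ∈ AffineSubspace.comap f.toAffineMap
      (AffineSubspace.mk' c (⊥ : Submodule ℝ ℝ)) := htop ▸ AffineSubspace.mem_top _ _ _
  have h2 : (c + 1) / ‖v‖ ^ 2 * inner ℝ v v = c := by
    simpa [AffineSubspace.mem_comap, AffineSubspace.mem_mk', hf, sub_eq_zero] using h1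
  rw [real_inner_self_eq_norm_sq] at h2
  have hv2 : ‖v‖^2 ≠ 0 := pow_ne_zero _ (norm_ne_zero_iff.mpr hv)
  field_simp at h2
  linarith

/-- Optimality of the Laguerre-cell transport map for the quadratic cost: any transport
plan between the restricted Lebesgue measure on the union of the cells and the induced
discrete measure on the seeds has cost at least that of the map sending each cell to
its seed. -/
theorem stmt6 {d N : ℕ} (hd : 1 ≤ d)
    (D : Set (EuclideanSpace ℝ (Fin d)))
    (hDo : IsOpen D) (hDb : Bornology.IsBounded D)
    (s : Fin N → EuclideanSpace ℝ (Fin d)) (hs : Function.Injective s)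
    (ψ : Fin N → ℝ)
    (π : Measure (EuclideanSpace ℝ (Fin d) × EuclideanSpace ℝ (Fin d)))
    [IsFiniteMeasure π]
    (h1 : π.map Prod.fst = volume.restrict (⋃ i, Vcell D s ψ i))
    (h2 : π.map Prod.snd = ∑ i, volume (Vcell D s ψ i) • Measure.dirac (s i)) :
    ∑ i, ∫⁻ x in Vcell D s ψ i, ENNReal.ofReal (‖x - s i‖ ^ 2) ≤
      ∫⁻ p, ENNReal.ofReal (‖p.1 - p.2‖ ^ 2) ∂π := by
  classical
  rcases eq_or_ne (∫⁻ p, ENNReal.ofReal (‖p.1 - p.2‖ ^ 2) ∂π) ⊤ with htop | hfin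
  · exact htop ▸ le_top
  obtain rfl | hN := Nat.eq_zero_or_pos N
  · simp
  haveI : Nonempty (Fin N) := Fin.pos_iff_nonempty.mp hN
  set V : Fin N → Set (EuclideanSpace ℝ (Fin d)) := Vcell D s ψ with hV
  -- basic topological facts about the cells
  have hcont : ∀ j : Fin N, Continuous fun x : EuclideanSpace ℝ (Fin d) => ‖x - s j‖ ^ 2 - ψ j :=
    fun j => (((continuous_id.sub continuous_const).norm.pow 2).sub continuous_const)
  have hVclosed : ∀ i, IsClosed (V i) := by
    intro i
    have h1 : IsClosed (Lag D s ψ i) := by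
      have : Lag D s ψ i = closure D ∩ ⋂ j : Fin N,
          {x | j ≠ i → ‖x - s i‖ ^ 2 - ψ i ≤ ‖x - s j‖ ^ 2 - ψ j} := by
        ext x; simp [Lag, Set.mem_iInter]
      rw [this]
      refine isClosed_closure.inter (isClosed_iInter fun j => ?_)
      by_cases hj : j = i
      · simp [hj]
      · have : {x : EuclideanSpace ℝ (Fin d) |
            j ≠ i → ‖x - s i‖ ^ 2 - ψ i ≤ ‖x - s j‖ ^ 2 - ψ j} =
            {x | ‖x - s i‖ ^ 2 - ψ i ≤ ‖x - s j‖ ^ 2 - ψ j} := by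
          ext x; simp [hj]
        rw [this]
        exact isClosed_le (hcont i) (hcont j)
    exact h1.inter (isClosed_le (by continuity) continuous_const)
  have hVsub : ∀ i, V i ⊆ closure D := fun i x hx => hx.1.1
  have hK : IsCompact (closure D) :=
    Metric.isCompact_of_isClosed_isBounded isClosed_closure hDb.closure
  have hVcomp : ∀ i, IsCompact (V i) := fun i =>
    IsCompact.of_isClosed_subset hK (hVclosed i) (hVsub i)
  have hVmeas : ∀ i, MeasurableSet (V i) := fun i => (hVclosed i).measurableSet
  have hVfin : ∀ i, volume (V i) ≠ ⊤ := fun i => (hVcomp i).measure_lt_top.ne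
  have hUcomp : IsCompact (⋃ i, V i) := isCompact_iUnion hVcomp
  have hUmeas : MeasurableSet (⋃ i, V i) := MeasurableSet.iUnion fun i => hVmeas i
  -- the dual potential φ
  set φ : EuclideanSpace ℝ (Fin d) → ℝ :=
    fun x => Finset.univ.inf' Finset.univ_nonempty (fun j => ‖x - s j‖ ^ 2 - ψ j) with hφ
  have hφcont : Continuous φ :=
    continuous_iff_continuousAt.2 fun x =>
      ContinuousAt.finset_inf'_apply Finset.univ_nonempty fun j _ => (hcont j).continuousAt
  have hφle : ∀ x j, φ x ≤ ‖x - s j‖ ^ 2 - ψ j := fun x j =>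
    Finset.inf'_le _ (Finset.mem_univ j)
  have hφeq : ∀ i, ∀ x ∈ V i, φ x = ‖x - s i‖ ^ 2 - ψ i := by
    intro i x hx
    refine le_antisymm (hφle x i) (Finset.le_inf' _ _ fun j _ => ?_)
    by_cases hj : j = i
    · subst hj; exact le_rfl
    · exact hx.1.2 j hj
  -- the dual potential η on seeds
  set η : EuclideanSpace ℝ (Fin d) → ℝ := fun y => ∑ j, if y = s j then ψ j else 0 with hη
  have hηmeas : Measurable η := by
    apply Finset.measurable_sum
    intro j _
    exact Measurable.ite (measurableSet_eq_fun measurable_id measurable_const)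
      measurable_const measurable_const
  have hηs : ∀ i, η (s i) = ψ i := by
    intro i
    simp only [hη, hs.eq_iff]
    rw [Finset.sum_ite_eq (Finset.univ : Finset (Fin N)) i ψ]
    simp
  have hηbd : ∀ y, ‖η y‖ ≤ ∑ j, |ψ j| := by
    intro y
    refine (Finset.abs_sum_le_sum_abs _ _).trans (Finset.sum_le_sum fun j _ => ?_)
    split <;> simp [abs_nonneg]
  -- a.e. concentration of π
  have haeU : ∀ᵐ p ∂π, (p : (EuclideanSpace ℝ (Fin d)) × (EuclideanSpace ℝ (Fin d))).1 ∈ ⋃ i, V i := by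
    rw [ae_iff]
    have : {p : (EuclideanSpace ℝ (Fin d)) × (EuclideanSpace ℝ (Fin d)) |
        ¬ p.1 ∈ ⋃ i, V i} = Prod.fst ⁻¹' (⋃ i, V i)ᶜ := rfl
    rw [this, ← Measure.map_apply measurable_fst hUmeas.compl, h1,
      Measure.restrict_apply hUmeas.compl, Set.compl_inter_self, measure_empty]
  have haeS : ∀ᵐ p ∂π, (p : (EuclideanSpace ℝ (Fin d)) × (EuclideanSpace ℝ (Fin d))).2 ∈ Set.range s := by
    rw [ae_iff]
    have hrm : MeasurableSet (Set.range s) := (Set.finite_range s).measurableSet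
    have : {p : (EuclideanSpace ℝ (Fin d)) × (EuclideanSpace ℝ (Fin d)) |
        ¬ p.2 ∈ Set.range s} = Prod.snd ⁻¹' (Set.range s)ᶜ := rfl
    rw [this, ← Measure.map_apply measurable_snd hrm.compl, h2]
    rw [Measure.finset_sum_apply]
    refine Finset.sum_eq_zero fun i _ => ?_
    rw [Measure.smul_apply, Measure.dirac_apply' _ hrm.compl]
    rw [Set.indicator_of_notMem (by simp [Set.mem_range_self])]
    simp
  -- cost integrability
  have hcmeas : Continuous fun p : (EuclideanSpace ℝ (Fin d)) × (EuclideanSpace ℝ (Fin d)) =>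
      ‖p.1 - p.2‖ ^ 2 := ((continuous_fst.sub continuous_snd).norm.pow 2)
  have hcint : Integrable (fun p : (EuclideanSpace ℝ (Fin d)) × (EuclideanSpace ℝ (Fin d)) =>
      ‖p.1 - p.2‖ ^ 2) π := by
    refine ⟨hcmeas.aestronglyMeasurable, ?_⟩
    rw [hasFiniteIntegral_iff_ofReal (Filter.Eventually.of_forall fun p => by positivity)]
    exact hfin.lt_top
  -- integrability of potentials
  obtain ⟨C, hC⟩ := hK.exists_bound_of_continuousOn hφcont.continuousOn
  have hφfst : Integrable (fun p : (EuclideanSpace ℝ (Fin d)) × (EuclideanSpace ℝ (Fin d)) =>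
      φ p.1) π := by
    refine Integrable.mono' (integrable_const C)
      (hφcont.comp continuous_fst).aestronglyMeasurable ?_
    filter_upwards [haeU] with p hp
    exact hC p.1 (Set.mem_of_mem_of_subset hp (Set.iUnion_subset hVsub))
  have hηsnd : Integrable (fun p : (EuclideanSpace ℝ (Fin d)) × (EuclideanSpace ℝ (Fin d)) =>
      η p.2) π := by
    refine Integrable.mono' (integrable_const (∑ j, |ψ j|))
      ((hηmeas.comp measurable_snd).aestronglyMeasurable) ?_
    exact Filter.Eventually.of_forall fun p => hηbd p.2
  -- the integrands on cells are integrable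
  have hint_i : ∀ i, IntegrableOn (fun x => ‖x - s i‖ ^ 2) (V i) := fun i =>
    ((continuous_id.sub continuous_const).norm.pow 2).continuousOn.integrableOn_compact (hVcomp i)
  have hφint_U : IntegrableOn φ (⋃ i, V i) := hφcont.continuousOn.integrableOn_compact hUcomp
  -- almost-everywhere disjointness of the cells
  have hdisj : Pairwise (Function.onFun (MeasureTheory.AEDisjoint volume) V) := by
    intro i j hij
    have hvne : (2 : ℝ) • (s j - s i) ≠ 0 :=
      smul_ne_zero two_ne_zero (sub_ne_zero.mpr fun h => hij (hs h).symm)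
    refine measure_mono_null (fun x hx => ?_)
      (volume_hyperplane volume ((2 : ℝ) • (s j - s i))
        hvne ((‖s j‖ ^ 2 - ψ j) - (‖s i‖ ^ 2 - ψ i)))
    obtain ⟨hxi, hxj⟩ := hx
    have e1 : ‖x - s i‖ ^ 2 - ψ i ≤ ‖x - s j‖ ^ 2 - ψ j := hxi.1.2 j fun h => hij h.symm
    have e2 : ‖x - s j‖ ^ 2 - ψ j ≤ ‖x - s i‖ ^ 2 - ψ i := hxj.1.2 i fun h => hij h
    have e : ‖x - s i‖ ^ 2 - ψ i = ‖x - s j‖ ^ 2 - ψ j := le_antisymm e1 e2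
    have hni : ‖x - s i‖ ^ 2 = ‖x‖ ^ 2 - 2 * inner ℝ x (s i) + ‖s i‖ ^ 2 := norm_sub_sq_real x (s i)
    have hnj : ‖x - s j‖ ^ 2 = ‖x‖ ^ 2 - 2 * inner ℝ x (s j) + ‖s j‖ ^ 2 := norm_sub_sq_real x (s j)
    show (inner ℝ x ((2 : ℝ) • (s j - s i)) : ℝ) = (‖s j‖ ^ 2 - ψ j) - (‖s i‖ ^ 2 - ψ i)
    rw [real_inner_smul_right, inner_sub_right]
    linarith
  -- real-integral identities
  have hmap_fst : ∫ p, φ p.1 ∂π = ∫ x in ⋃ i, V i, φ x := by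
    rw [← integral_map measurable_fst.aemeasurable hφcont.aestronglyMeasurable, h1]
  have hmap_snd : ∫ p, η p.2 ∂π = ∑ i, (volume (V i)).toReal * ψ i := by
    rw [← integral_map measurable_snd.aemeasurable hηmeas.aestronglyMeasurable, h2]
    rw [integral_finset_sum_measure fun i _ => ?_]
    · refine Finset.sum_congr rfl fun i _ => ?_
      rw [integral_smul_measure, integral_dirac, hηs i, smul_eq_mul]
    · refine Integrable.smul_measure ?_ (hVfin i)
      exact Integrable.mono' (integrable_const (∑ j, |ψ j|)) hηmeas.aestronglyMeasurable
        (Filter.Eventually.of_forall fun y => hηbd y)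
  have hUn : ∫ x in ⋃ i, V i, φ x
      = ∑ i, ((∫ x in V i, ‖x - s i‖ ^ 2) - (volume (V i)).toReal * ψ i) := by
    rw [integral_iUnion_ae (fun i => (hVmeas i).nullMeasurableSet) hdisj hφint_U, tsum_fintype]
    refine Finset.sum_congr rfl fun i _ => ?_
    rw [setIntegral_congr_fun (hVmeas i) (fun x hx => hφeq i x hx)]
    rw [integral_sub (hint_i i) (integrableOn_const (hVfin i))]
    rw [setIntegral_const, smul_eq_mul, Measure.real]
  -- key real inequality (weak duality)
  have key : ∑ i, ∫ x in V i, ‖x - s i‖ ^ 2 ≤ ∫ p, ‖p.1 - p.2‖ ^ 2 ∂π := by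
    have hdual : ∫ p, (φ p.1 + η p.2) ∂π ≤ ∫ p, ‖p.1 - p.2‖ ^ 2 ∂π := by
      refine integral_mono_ae (hφfst.add hηsnd) hcint ?_
      filter_upwards [haeS] with p hp
      obtain ⟨j, hj⟩ := hp
      calc φ p.1 + η p.2 = φ p.1 + ψ j := by rw [← hj, hηs j]
        _ ≤ (‖p.1 - s j‖ ^ 2 - ψ j) + ψ j := by linarith [hφle p.1 j]
        _ = ‖p.1 - p.2‖ ^ 2 := by rw [hj]; ring
    have hsplit : ∫ p, (φ p.1 + η p.2) ∂π = (∫ p, φ p.1 ∂π) + ∫ p, η p.2 ∂π :=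
      integral_add hφfst hηsnd
    rw [hsplit, hmap_fst, hmap_snd, hUn] at hdual
    calc ∑ i, ∫ x in V i, ‖x - s i‖ ^ 2
        = (∑ i, ((∫ x in V i, ‖x - s i‖ ^ 2) - (volume (V i)).toReal * ψ i))
          + ∑ i, (volume (V i)).toReal * ψ i := by
          rw [Finset.sum_sub_distrib]; ring
      _ ≤ ∫ p, ‖p.1 - p.2‖ ^ 2 ∂π := hdual
  -- convert to lintegrals
  have hlhs : ∀ i, ∫⁻ x in V i, ENNReal.ofReal (‖x - s i‖ ^ 2)
      = ENNReal.ofReal (∫ x in V i, ‖x - s i‖ ^ 2) := fun i =>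
    (ofReal_integral_eq_lintegral_ofReal (hint_i i)
      (Filter.Eventually.of_forall fun x => by positivity)).symm
  have hrhs : ∫⁻ p, ENNReal.ofReal (‖p.1 - p.2‖ ^ 2) ∂π
      = ENNReal.ofReal (∫ p, ‖p.1 - p.2‖ ^ 2 ∂π) :=
    (ofReal_integral_eq_lintegral_ofReal hcint
      (Filter.Eventually.of_forall fun p => by positivity)).symm
  calc ∑ i, ∫⁻ x in V i, ENNReal.ofReal (‖x - s i‖ ^ 2)
      = ∑ i, ENNReal.ofReal (∫ x in V i, ‖x - s i‖ ^ 2) := Finset.sum_congr rfl fun i _ => hlhs i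
    _ = ENNReal.ofReal (∑ i, ∫ x in V i, ‖x - s i‖ ^ 2) :=
        (ENNReal.ofReal_sum_of_nonneg fun i _ =>
          setIntegral_nonneg (hVmeas i) fun x _ => by positivity).symm
    _ ≤ ENNReal.ofReal (∫ p, ‖p.1 - p.2‖ ^ 2 ∂π) := ENNReal.ofReal_le_ofReal key
    _ = ∫⁻ p, ENNReal.ofReal (‖p.1 - p.2‖ ^ 2) ∂π := hrhs.symm
end
end

section
/- Let m, n, k ≥ 1 (finite-dimensional Euclidean spaces ℝ^m for seeds, ℝ^n for cell measures and weights, ℝ^k for vertices). Let F : ℝ^m × ℝ^n × ℝ^n → ℝ^n, Q : ℝ^m × ℝ^n → ℝ^k, J : ℝ^k → ℝ and ψ* : ℝ^m × ℝ^n → ℝ^n be maps, fix (s,ν) ∈ ℝ^m × ℝ^n and write ψ₀ := ψ*(s,ν), q := Q(s,ψ₀). Assume: ψ* is (Fréchet) differentiable at (s,ν); Q is differentiable at (s,ψ₀); F is differentiable at (s,ν,ψ₀); J is differentiable at q; and F(s',ν',ψ*(s',ν')) = 0 for all (s',ν') in a neighborhood of (s,ν). Suppose p ∈ ℝ^n solves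 the adjoint system [∂_ψF(s,ν,ψ₀)]ᵀ p = −[∂_ψQ(s,ψ₀)]ᵀ ∇J(q). Define the composite functional J̃(s',ν') := J(Q(s', ψ*(s',ν'))). Then J̃ is differentiable at (s,ν) with ∇_s J̃(s,ν) = [∂_s Q(s,ψ₀)]ᵀ ∇J(q) + [∂_s F(s,ν,ψ₀)]ᵀ p and ∇_ν J̃(s,ν) = [∂_ν F(s,ν,ψ₀)]ᵀ p. -/
noncomputable section

namespace Stmt14

variable {m n k : ℕ}

/-- Abbreviations for the Euclidean spaces of seeds, measures/weights and vertices. -/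
local notation "Em" => EuclideanSpace ℝ (Fin m)
local notation "En" => EuclideanSpace ℝ (Fin n)
local notation "Ek" => EuclideanSpace ℝ (Fin k)

/-- Adjoint-state computation: derivatives of the composite functional
`J̃(s, ν) = J(Q(s, ψ*(s, ν)))` with respect to the seed points `s` and the cell
measures `ν`, where `ψ*(s, ν)` is implicitly defined by `F(s, ν, ψ*(s, ν)) = 0` and
`p` solves the adjoint system `[∂_ψ F]ᵀ p = -[∂_ψ Q]ᵀ ∇J(q)`. -/
theorem stmt14 (hm : 1 ≤ m) (hn : 1 ≤ n) (hk : 1 ≤ k)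
    (F : Em × En × En → En) (Q : Em × En → Ek) (J : Ek → ℝ)
    (ψstar : Em × En → En)
    (s : Em) (ν : En)
    (Dψ : (Em × En) →L[ℝ] En)
    (hψ : HasFDerivAt ψstar Dψ (s, ν))
    (DQ : (Em × En) →L[ℝ] Ek)
    (hQ : HasFDerivAt Q DQ (s, ψstar (s, ν)))
    (DF : (Em × En × En) →L[ℝ] En)
    (hF : HasFDerivAt F DF (s, ν, ψstar (s, ν)))
    (gJ : Ek)
    (hJ : HasGradientAt J gJ (Q (s, ψstar (s, ν))))
    (hzero : ∀ᶠ p in nhds (s, ν), F (p.1, p.2, ψstar p) = 0)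
    (p : En)
    (hadj : (DF.comp ((ContinuousLinearMap.inr ℝ Em (En × En)).comp
        (ContinuousLinearMap.inr ℝ En En))).adjoint p
      = - (DQ.comp (ContinuousLinearMap.inr ℝ Em En)).adjoint gJ) :
    DifferentiableAt ℝ (fun q : Em × En => J (Q (q.1, ψstar q))) (s, ν) ∧
    HasGradientAt (fun s' : Em => J (Q (s', ψstar (s', ν))))
      ((DQ.comp (ContinuousLinearMap.inl ℝ Em En)).adjoint gJ
        + (DF.comp (ContinuousLinearMap.inl ℝ Em (En × En))).adjoint p) s ∧
    HasGradientAt (fun ν' : En => J (Q (s, ψstar (s, ν'))))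
      ((DF.comp ((ContinuousLinearMap.inr ℝ Em (En × En)).comp
          (ContinuousLinearMap.inl ℝ En En))).adjoint p) ν := by
  have hJ' : HasFDerivAt J (InnerProductSpace.toDual ℝ Ek gJ) (Q (s, ψstar (s, ν))) :=
    hasGradientAt_iff_hasFDerivAt.mp hJ
  -- derivative of the implicit constraint map is zero
  have hΦ : HasFDerivAt (fun q : Em × En => ((q.1, q.2, ψstar q) : Em × En × En))
      ((ContinuousLinearMap.fst ℝ Em En).prod
        ((ContinuousLinearMap.snd ℝ Em En).prod Dψ)) (s, ν) :=
    HasFDerivAt.prodMk (hasFDerivAt_fst) (HasFDerivAt.prodMk (hasFDerivAt_snd) hψ)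
  have hFΦ : HasFDerivAt (fun q : Em × En => F (q.1, q.2, ψstar q))
      (DF.comp ((ContinuousLinearMap.fst ℝ Em En).prod
        ((ContinuousLinearMap.snd ℝ Em En).prod Dψ))) (s, ν) := hF.comp (s, ν) hΦ
  have h0 : HasFDerivAt (fun q : Em × En => F (q.1, q.2, ψstar q)) 0 (s, ν) :=
    (hasFDerivAt_const (𝕜 := ℝ) (0 : En) ((s, ν) : Em × En)).congr_of_eventuallyEq hzero
  have huniq := hFΦ.unique h0
  have hkey : ∀ (a : Em) (b : En), DF (a, b, Dψ (a, b)) = 0 := by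
    intro a b
    have := ContinuousLinearMap.ext_iff.mp huniq (a, b)
    simpa using this
  -- splitting lemmas
  have hDFsplit : ∀ (a : Em) (b c : En),
      DF (a, b, c) = DF (a, 0, 0) + DF (0, b, 0) + DF (0, 0, c) := by
    intro a b c
    have h : (a, b, c) = ((a, (0:En), (0:En)) : Em × En × En) + ((0:Em), b, (0:En))
        + ((0:Em), (0:En), c) := by
      simp [Prod.ext_iff]
    rw [h, map_add, map_add]
  have hDQsplit : ∀ (a : Em) (b : En), DQ (a, b) = DQ (a, 0) + DQ (0, b) := by
    intro a b
    have h : (a, b) = ((a, (0:En)) : Em × En) + ((0:Em), b) := by simp [Prod.ext_iff]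
    rw [h, map_add]
  -- pointwise adjoint identity
  have hadjpt : ∀ v : En,
      (inner ℝ p (DF (0, 0, v)) : ℝ) = - inner ℝ gJ (DQ (0, v)) := by
    intro v
    have h := congrArg (fun w : En => (inner ℝ w v : ℝ)) hadj
    simpa [ContinuousLinearMap.adjoint_inner_left, inner_neg_left] using h
  have hflip : ∀ (a : Em) (b : En),
      DF (0, 0, Dψ (a, b)) = - (DF (a, 0, 0) + DF (0, b, 0)) := by
    intro a b
    have h := hkey a b
    rw [hDFsplit] at h
    exact eq_neg_of_add_eq_zero_right h
  have hz3 : DF ((0:Em), (0:En), (0:En)) = 0 := by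
    have h : ((0:Em), (0:En), (0:En)) = (0 : Em × En × En) := rfl
    rw [h, map_zero]
  -- the two key scalar identities
  have key_s : ∀ h : Em, (inner ℝ gJ (DQ (h, Dψ (h, 0))) : ℝ)
      = inner ℝ gJ (DQ (h, 0)) + inner ℝ p (DF (h, 0, 0)) := by
    intro h
    have h1 : DF ((0:Em), (0:En), Dψ (h, 0)) = - DF (h, 0, 0) := by
      rw [hflip h 0, hz3, add_zero]
    have h2 := hadjpt (Dψ (h, 0))
    rw [h1, inner_neg_right] at h2
    rw [hDQsplit h (Dψ (h, 0)), inner_add_right]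
    linarith
  have key_ν : ∀ e : En, (inner ℝ gJ (DQ (0, Dψ (0, e))) : ℝ)
      = inner ℝ p (DF (0, e, 0)) := by
    intro e
    have h1 : DF ((0:Em), (0:En), Dψ (0, e)) = - DF (0, e, 0) := by
      rw [hflip 0 e, hz3, zero_add]
    have h2 := hadjpt (Dψ (0, e))
    rw [h1, inner_neg_right] at h2
    linarith
  -- differentiability of the composite
  have hcomp : HasFDerivAt (fun q : Em × En => Q (q.1, ψstar q))
      (DQ.comp ((ContinuousLinearMap.fst ℝ Em En).prod Dψ)) (s, ν) :=
    hQ.comp (s, ν) (HasFDerivAt.prodMk (hasFDerivAt_fst) hψ)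
  have hdiff : DifferentiableAt ℝ (fun q : Em × En => J (Q (q.1, ψstar q))) (s, ν) :=
    (hJ'.comp (s, ν) hcomp).differentiableAt
  refine ⟨hdiff, ?_, ?_⟩
  · -- gradient in s
    have hpair : HasFDerivAt (fun s' : Em => ((s', ν) : Em × En))
        ((ContinuousLinearMap.id ℝ Em).prod 0) s :=
      HasFDerivAt.prodMk (hasFDerivAt_id s) (hasFDerivAt_const ν s)
    have hψs : HasFDerivAt (fun s' : Em => ψstar (s', ν))
        (Dψ.comp ((ContinuousLinearMap.id ℝ Em).prod 0)) s := hψ.comp s hpair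
    have hQs : HasFDerivAt (fun s' : Em => Q (s', ψstar (s', ν)))
        (DQ.comp ((ContinuousLinearMap.id ℝ Em).prod
          (Dψ.comp ((ContinuousLinearMap.id ℝ Em).prod 0)))) s :=
      hQ.comp s (HasFDerivAt.prodMk (hasFDerivAt_id s) hψs)
    have hs : HasFDerivAt (fun s' : Em => J (Q (s', ψstar (s', ν))))
        ((InnerProductSpace.toDual ℝ Ek gJ).comp
          (DQ.comp ((ContinuousLinearMap.id ℝ Em).prod
            (Dψ.comp ((ContinuousLinearMap.id ℝ Em).prod 0))))) s := hJ'.comp s hQs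
    rw [hasGradientAt_iff_hasFDerivAt]
    have heq : (InnerProductSpace.toDual ℝ Em)
        ((DQ.comp (ContinuousLinearMap.inl ℝ Em En)).adjoint gJ
          + (DF.comp (ContinuousLinearMap.inl ℝ Em (En × En))).adjoint p)
        = (InnerProductSpace.toDual ℝ Ek gJ).comp
          (DQ.comp ((ContinuousLinearMap.id ℝ Em).prod
            (Dψ.comp ((ContinuousLinearMap.id ℝ Em).prod 0)))) := by
      apply ContinuousLinearMap.ext
      intro h
      rw [InnerProductSpace.toDual_apply_apply, inner_add_left,
        ContinuousLinearMap.adjoint_inner_left, ContinuousLinearMap.adjoint_inner_left]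
      simp only [ContinuousLinearMap.comp_apply, ContinuousLinearMap.inl_apply,
        ContinuousLinearMap.prod_apply, ContinuousLinearMap.id_apply,
        ContinuousLinearMap.zero_apply, InnerProductSpace.toDual_apply_apply]
      exact (key_s h).symm
    rw [heq]
    exact hs
  · -- gradient in ν
    have hpair : HasFDerivAt (fun ν' : En => ((s, ν') : Em × En))
        ((0 : En →L[ℝ] Em).prod (ContinuousLinearMap.id ℝ En)) ν :=
      HasFDerivAt.prodMk (hasFDerivAt_const s ν) (hasFDerivAt_id ν)
    have hψν : HasFDerivAt (fun ν' : En => ψstar (s, ν'))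
        (Dψ.comp ((0 : En →L[ℝ] Em).prod (ContinuousLinearMap.id ℝ En))) ν :=
      hψ.comp ν hpair
    have hQν : HasFDerivAt (fun ν' : En => Q (s, ψstar (s, ν')))
        (DQ.comp ((0 : En →L[ℝ] Em).prod
          (Dψ.comp ((0 : En →L[ℝ] Em).prod (ContinuousLinearMap.id ℝ En))))) ν :=
      hQ.comp ν (HasFDerivAt.prodMk (hasFDerivAt_const s ν) hψν)
    have hν : HasFDerivAt (fun ν' : En => J (Q (s, ψstar (s, ν'))))
        ((InnerProductSpace.toDual ℝ Ek gJ).comp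
          (DQ.comp ((0 : En →L[ℝ] Em).prod
            (Dψ.comp ((0 : En →L[ℝ] Em).prod (ContinuousLinearMap.id ℝ En)))))) ν :=
      hJ'.comp ν hQν
    rw [hasGradientAt_iff_hasFDerivAt]
    have heq : (InnerProductSpace.toDual ℝ En)
        ((DF.comp ((ContinuousLinearMap.inr ℝ Em (En × En)).comp
          (ContinuousLinearMap.inl ℝ En En))).adjoint p)
        = (InnerProductSpace.toDual ℝ Ek gJ).comp
          (DQ.comp ((0 : En →L[ℝ] Em).prod
            (Dψ.comp ((0 : En →L[ℝ] Em).prod (ContinuousLinearMap.id ℝ En))))) := by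
      apply ContinuousLinearMap.ext
      intro e
      rw [InnerProductSpace.toDual_apply_apply, ContinuousLinearMap.adjoint_inner_left]
      simp only [ContinuousLinearMap.comp_apply, ContinuousLinearMap.inl_apply,
        ContinuousLinearMap.inr_apply, ContinuousLinearMap.prod_apply,
        ContinuousLinearMap.id_apply, ContinuousLinearMap.zero_apply,
        InnerProductSpace.toDual_apply_apply]
      exact (key_ν e).symm
    rw [heq]
    exact hν

end Stmt14
end
end

section
/- Let E ⊆ ℝ² be a bounded open set with 0 < vol(E) < ∞, let λ, μ > 0 be Lamé coefficients, let q_1, …, q_n ∈ ℝ² (n ≥ 1) and q̄ := (1/n) Σ_{i=1}^n q_i. Let u, v : ℝ² → ℝ² be continuously differentiable on a neighborhood of closure(E). With the projections π_R u(x) := ū + ⟨ω(u)⟩ (−(x₂ − q̄₂), x₁ − q̄₁), π_C u(x) := ⟨e(u)⟩ (x − q̄), and π_P u := π_R u + π_C u, the local elastic energy bilinear form decomposes as a^E(u,v) = a^E(π_C u, π_C v) + a^E(u − π_P u, v − π_P v). -/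
open MeasureTheory

noncomputable section

/-- The Jacobian matrix `(∂_j u_i)_{ij}` of a planar vector field. -/
def gradMat (u : EuclideanSpace ℝ (Fin 2) → EuclideanSpace ℝ (Fin 2))
    (x : EuclideanSpace ℝ (Fin 2)) : Matrix (Fin 2) (Fin 2) ℝ :=
  Matrix.of fun i j => fderiv ℝ u x (EuclideanSpace.single j 1) i

/-- The linearized strain `e(u) = ½ (Du + Duᵀ)`. -/
def strain (u : EuclideanSpace ℝ (Fin 2) → EuclideanSpace ℝ (Fin 2))
    (x : EuclideanSpace ℝ (Fin 2)) : Matrix (Fin 2) (Fin 2) ℝ :=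
  Matrix.of fun i j => (gradMat u x i j + gradMat u x j i) / 2

/-- Half the scalar curl `ω(u) = ½ (∂₁u₂ - ∂₂u₁)`. -/
def curlHalf (u : EuclideanSpace ℝ (Fin 2) → EuclideanSpace ℝ (Fin 2))
    (x : EuclideanSpace ℝ (Fin 2)) : ℝ :=
  (gradMat u x 1 0 - gradMat u x 0 1) / 2

/-- The Hooke tensor `Aξ = 2μ ξ + λ tr(ξ) I`. -/
def hooke (lam mu : ℝ) (ξ : Matrix (Fin 2) (Fin 2) ℝ) : Matrix (Fin 2) (Fin 2) ℝ :=
  (2 * mu) • ξ + (lam * ξ.trace) • (1 : Matrix (Fin 2) (Fin 2) ℝ)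

/-- The local elastic energy bilinear form `a^E(u,v) = ∫_E Ae(u) : e(v) dx`. -/
def aEelas (E : Set (EuclideanSpace ℝ (Fin 2))) (lam mu : ℝ)
    (u v : EuclideanSpace ℝ (Fin 2) → EuclideanSpace ℝ (Fin 2)) : ℝ :=
  ∫ x in E, ∑ i, ∑ j, hooke lam mu (strain u x) i j * strain v x i j

/-- The mean strain `⟨e(u)⟩ = (1/vol E) ∫_E e(u) dx` (computed entrywise). -/
def meanStrain (E : Set (EuclideanSpace ℝ (Fin 2)))
    (u : EuclideanSpace ℝ (Fin 2) → EuclideanSpace ℝ (Fin 2)) :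
    Matrix (Fin 2) (Fin 2) ℝ :=
  Matrix.of fun i j => (volume E).toReal⁻¹ * ∫ x in E, strain u x i j

/-- The mean rotation `⟨ω(u)⟩ = (1/vol E) ∫_E ω(u) dx`. -/
def meanRot (E : Set (EuclideanSpace ℝ (Fin 2)))
    (u : EuclideanSpace ℝ (Fin 2) → EuclideanSpace ℝ (Fin 2)) : ℝ :=
  (volume E).toReal⁻¹ * ∫ x in E, curlHalf u x

/-- The vertex average `ū = (1/n) ∑ u(q_i)`. -/
def vavg (n : ℕ) (q : Fin n → EuclideanSpace ℝ (Fin 2))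
    (u : EuclideanSpace ℝ (Fin 2) → EuclideanSpace ℝ (Fin 2)) :
    EuclideanSpace ℝ (Fin 2) :=
  (n : ℝ)⁻¹ • ∑ i, u (q i)

/-- Matrix-vector multiplication landing in `EuclideanSpace ℝ (Fin 2)`. -/
def matVec (M : Matrix (Fin 2) (Fin 2) ℝ) (v : EuclideanSpace ℝ (Fin 2)) :
    EuclideanSpace ℝ (Fin 2) :=
  ∑ i, EuclideanSpace.single i (∑ j, M i j * v j)

/-- The 90° rotation `v ↦ (-v₂, v₁)`. -/
def rot90 (v : EuclideanSpace ℝ (Fin 2)) : EuclideanSpace ℝ (Fin 2) :=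
  EuclideanSpace.single 0 (-(v 1)) + EuclideanSpace.single 1 (v 0)

/-- The projection `π_R u (x) = ū + ⟨ω(u)⟩ (-(x₂ - q̄₂), x₁ - q̄₁)` onto rigid-body
motions, with base point the vertex average `q̄`. -/
def piRelas (E : Set (EuclideanSpace ℝ (Fin 2))) (n : ℕ)
    (q : Fin n → EuclideanSpace ℝ (Fin 2))
    (u : EuclideanSpace ℝ (Fin 2) → EuclideanSpace ℝ (Fin 2)) :
    EuclideanSpace ℝ (Fin 2) → EuclideanSpace ℝ (Fin 2) :=
  fun x => vavg n q u + meanRot E u • rot90 (x - (n : ℝ)⁻¹ • ∑ i, q i)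

/-- The projection `π_C u (x) = ⟨e(u)⟩ (x - q̄)` onto constant-strain fields. -/
def piCelas (E : Set (EuclideanSpace ℝ (Fin 2)))
    (qbar : EuclideanSpace ℝ (Fin 2))
    (u : EuclideanSpace ℝ (Fin 2) → EuclideanSpace ℝ (Fin 2)) :
    EuclideanSpace ℝ (Fin 2) → EuclideanSpace ℝ (Fin 2) :=
  fun x => matVec (meanStrain E u) (x - qbar)

/-- The projection `π_P u = π_R u + π_C u` onto affine displacement fields. -/
def piPelas (E : Set (EuclideanSpace ℝ (Fin 2))) (n : ℕ)
    (q : Fin n → EuclideanSpace ℝ (Fin 2))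
    (u : EuclideanSpace ℝ (Fin 2) → EuclideanSpace ℝ (Fin 2)) :
    EuclideanSpace ℝ (Fin 2) → EuclideanSpace ℝ (Fin 2) :=
  fun x => piRelas E n q u x + piCelas E ((n : ℝ)⁻¹ • ∑ i, q i) u x


/-! ### Auxiliary lemmas -/

lemma matVec_apply' (M : Matrix (Fin 2) (Fin 2) ℝ) (v : EuclideanSpace ℝ (Fin 2)) (k : Fin 2) :
    matVec M v k = ∑ j, M k j * v j := by
  fin_cases k <;> simp [matVec, EuclideanSpace.single_apply, Finset.sum_apply]

/-- `matVec M` as a continuous linear map. -/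
def matVecL (M : Matrix (Fin 2) (Fin 2) ℝ) :
    EuclideanSpace ℝ (Fin 2) →L[ℝ] EuclideanSpace ℝ (Fin 2) :=
  LinearMap.toContinuousLinearMap
  { toFun := matVec M
    map_add' := by intro a b; ext k; simp [matVec_apply', mul_add, Finset.sum_add_distrib]
    map_smul' := by intro c a; ext k; simp [matVec_apply', Finset.mul_sum]; ring_nf }

/-- `rot90` as a continuous linear map. -/
def rotL : EuclideanSpace ℝ (Fin 2) →L[ℝ] EuclideanSpace ℝ (Fin 2) :=
  LinearMap.toContinuousLinearMap
  { toFun := rot90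
    map_add' := by
      intro a b; ext k
      fin_cases k <;> (simp [rot90, EuclideanSpace.single_apply]; try ring)
    map_smul' := by intro c a; ext k; fin_cases k <;> simp [rot90, EuclideanSpace.single_apply] }

lemma matVecL_apply (M : Matrix (Fin 2) (Fin 2) ℝ) (v) : matVecL M v = matVec M v := rfl
lemma rotL_apply (v) : rotL v = rot90 v := rfl

lemma hasFDerivAt_piP (a c : EuclideanSpace ℝ (Fin 2)) (w : ℝ) (M : Matrix (Fin 2) (Fin 2) ℝ)
    (x : EuclideanSpace ℝ (Fin 2)) :
    HasFDerivAt (fun y => (a + w • rot90 (y - c)) + matVec M (y - c)) (w • rotL + matVecL M) x := by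
  have hid : HasFDerivAt (fun y : EuclideanSpace ℝ (Fin 2) => y - c)
      (ContinuousLinearMap.id ℝ (EuclideanSpace ℝ (Fin 2))) x := (hasFDerivAt_id x).sub_const c
  have h1 : HasFDerivAt (fun y => rot90 (y - c)) rotL x := by
    have := (rotL.hasFDerivAt (x := x - c)).comp x hid
    rw [ContinuousLinearMap.comp_id] at this; exact this
  have h2 : HasFDerivAt (fun y => matVec M (y - c)) (matVecL M) x := by
    have := ((matVecL M).hasFDerivAt (x := x - c)).comp x hid
    rw [ContinuousLinearMap.comp_id] at this; exact this
  exact ((h1.const_smul w).const_add a).add h2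

lemma strain_symm_entry (u : EuclideanSpace ℝ (Fin 2) → EuclideanSpace ℝ (Fin 2))
    (x : EuclideanSpace ℝ (Fin 2)) (i j : Fin 2) : strain u x i j = strain u x j i := by
  simp [strain, add_comm]

lemma strain_sub_piP (u : EuclideanSpace ℝ (Fin 2) → EuclideanSpace ℝ (Fin 2))
    (a c : EuclideanSpace ℝ (Fin 2)) (w : ℝ) (M : Matrix (Fin 2) (Fin 2) ℝ)
    (hM : M 0 1 = M 1 0) (x : EuclideanSpace ℝ (Fin 2)) (hu : DifferentiableAt ℝ u x) :
    strain (fun y => u y - ((a + w • rot90 (y - c)) + matVec M (y - c))) x = strain u x - M := by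
  have h : fderiv ℝ (fun y => u y - ((a + w • rot90 (y - c)) + matVec M (y - c))) x
      = fderiv ℝ u x - (w • rotL + matVecL M) :=
    (hu.hasFDerivAt.sub (hasFDerivAt_piP a c w M x)).fderiv
  ext i j
  simp only [strain, gradMat, Matrix.of_apply, Matrix.sub_apply, h,
    ContinuousLinearMap.sub_apply, ContinuousLinearMap.add_apply,
    ContinuousLinearMap.coe_smul', Pi.smul_apply, matVecL_apply, rotL_apply]
  fin_cases i <;> fin_cases j <;>
    simp [matVec_apply', rot90, EuclideanSpace.single_apply] <;> linarith [hM]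

lemma strain_const_matVec (c : EuclideanSpace ℝ (Fin 2)) (M : Matrix (Fin 2) (Fin 2) ℝ)
    (hM : M 0 1 = M 1 0) (x : EuclideanSpace ℝ (Fin 2)) :
    strain (fun y => matVec M (y - c)) x = M := by
  have hid : HasFDerivAt (fun y : EuclideanSpace ℝ (Fin 2) => y - c)
      (ContinuousLinearMap.id ℝ (EuclideanSpace ℝ (Fin 2))) x := (hasFDerivAt_id x).sub_const c
  have h2 : HasFDerivAt (fun y => matVec M (y - c)) (matVecL M) x := by
    have := ((matVecL M).hasFDerivAt (x := x - c)).comp x hid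
    rw [ContinuousLinearMap.comp_id] at this; exact this
  have h := h2.fderiv
  ext i j
  simp only [strain, gradMat, Matrix.of_apply, h, matVecL_apply]
  fin_cases i <;> fin_cases j <;>
    simp [matVec_apply', EuclideanSpace.single_apply] <;> linarith [hM]

lemma strain_continuousOn (u : EuclideanSpace ℝ (Fin 2) → EuclideanSpace ℝ (Fin 2))
    (U : Set (EuclideanSpace ℝ (Fin 2))) (hU : IsOpen U) (hu : ContDiffOn ℝ 1 u U)
    (i j : Fin 2) : ContinuousOn (fun x => strain u x i j) U := by
  have h := hu.continuousOn_fderiv_of_isOpen hU le_rfl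
  have key : ∀ (w : EuclideanSpace ℝ (Fin 2)) (k : Fin 2),
      ContinuousOn (fun x => fderiv ℝ u x w k) U := by
    intro w k
    exact ((continuous_apply k).comp (PiLp.continuous_ofLp 2 _)).comp_continuousOn
      ((ContinuousLinearMap.apply ℝ (EuclideanSpace ℝ (Fin 2)) w).continuous.comp_continuousOn h)
  simp only [strain, gradMat, Matrix.of_apply]
  exact ((key _ i).add (key _ j)).div_const 2

/-- Energy decomposition for the Virtual Element Method in linear elasticity:
`a^E(u,v) = a^E(π_C u, π_C v) + a^E(u - π_P u, v - π_P v)`. -/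
theorem stmt17
    (E : Set (EuclideanSpace ℝ (Fin 2))) (hEo : IsOpen E)
    (hEb : Bornology.IsBounded E) (hEpos : 0 < volume E)
    (lam mu : ℝ) (hlam : 0 < lam) (hmu : 0 < mu)
    (n : ℕ) (hn : 1 ≤ n) (q : Fin n → EuclideanSpace ℝ (Fin 2))
    (u v : EuclideanSpace ℝ (Fin 2) → EuclideanSpace ℝ (Fin 2))
    (U : Set (EuclideanSpace ℝ (Fin 2))) (hU : IsOpen U) (hEU : closure E ⊆ U)
    (hu : ContDiffOn ℝ 1 u U) (hv : ContDiffOn ℝ 1 v U) :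
    aEelas E lam mu u v =
      aEelas E lam mu (piCelas E ((n : ℝ)⁻¹ • ∑ i, q i) u)
        (piCelas E ((n : ℝ)⁻¹ • ∑ i, q i) v)
      + aEelas E lam mu (fun x => u x - piPelas E n q u x)
          (fun x => v x - piPelas E n q v x) := by
  classical
  set qb : EuclideanSpace ℝ (Fin 2) := (n : ℝ)⁻¹ • ∑ i, q i with hqb
  set Mu := meanStrain E u with hMu
  set Mv := meanStrain E v with hMv
  have hmeas : MeasurableSet E := hEo.measurableSet
  have hfin : volume E < ⊤ :=
    lt_of_le_of_lt (measure_mono subset_closure) hEb.isCompact_closure.measure_lt_top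
  have ht0 : (volume E).toReal ≠ 0 := (ENNReal.toReal_pos hEpos.ne' hfin.ne).ne'
  set V := (volume E).toReal with hVdef
  -- symmetry of the mean strains
  have hMusymm : Mu 0 1 = Mu 1 0 := by
    rw [hMu]; simp only [meanStrain, Matrix.of_apply]
    congr 1
    exact setIntegral_congr_fun hmeas fun x _ => strain_symm_entry u x 0 1
  have hMvsymm : Mv 0 1 = Mv 1 0 := by
    rw [hMv]; simp only [meanStrain, Matrix.of_apply]
    congr 1
    exact setIntegral_congr_fun hmeas fun x _ => strain_symm_entry v x 0 1
  -- continuity and integrability of the strain entries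
  have hcu : ∀ i j : Fin 2, ContinuousOn (fun x => strain u x i j) (closure E) :=
    fun i j => (strain_continuousOn u U hU hu i j).mono hEU
  have hcv : ∀ i j : Fin 2, ContinuousOn (fun x => strain v x i j) (closure E) :=
    fun i j => (strain_continuousOn v U hU hv i j).mono hEU
  have hIntOn : ∀ f : EuclideanSpace ℝ (Fin 2) → ℝ,
      ContinuousOn f (closure E) → IntegrableOn f E volume :=
    fun f hf => (hf.integrableOn_compact hEb.isCompact_closure).mono_set subset_closure
  have hInt_u : ∀ i j : Fin 2, IntegrableOn (fun x => strain u x i j) E volume :=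
    fun i j => hIntOn _ (hcu i j)
  have hInt_v : ∀ i j : Fin 2, IntegrableOn (fun x => strain v x i j) E volume :=
    fun i j => hIntOn _ (hcv i j)
  -- the entrywise mean-strain integrals
  have hIu : ∀ i j : Fin 2, (∫ x in E, strain u x i j) = V * Mu i j := by
    intro i j
    rw [hMu]; simp only [meanStrain, Matrix.of_apply]
    rw [hVdef, ← mul_assoc, mul_inv_cancel₀ ht0, one_mul]
  have hIv : ∀ i j : Fin 2, (∫ x in E, strain v x i j) = V * Mv i j := by
    intro i j
    rw [hMv]; simp only [meanStrain, Matrix.of_apply]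
    rw [hVdef, ← mul_assoc, mul_inv_cancel₀ ht0, one_mul]
  -- differentiability on E
  have hdu : ∀ x ∈ E, DifferentiableAt ℝ u x := fun x hx =>
    (hu.differentiableOn one_ne_zero).differentiableAt (hU.mem_nhds (hEU (subset_closure hx)))
  have hdv : ∀ x ∈ E, DifferentiableAt ℝ v x := fun x hx =>
    (hv.differentiableOn one_ne_zero).differentiableAt (hU.mem_nhds (hEU (subset_closure hx)))
  -- strain of the projections
  have hsCu : ∀ x, strain (piCelas E qb u) x = Mu :=
    fun x => strain_const_matVec qb Mu hMusymm x
  have hsCv : ∀ x, strain (piCelas E qb v) x = Mv :=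
    fun x => strain_const_matVec qb Mv hMvsymm x
  have hsPu : ∀ x ∈ E, strain (fun y => u y - piPelas E n q u y) x = strain u x - Mu := by
    intro x hx
    exact strain_sub_piP u (vavg n q u) qb (meanRot E u) Mu hMusymm x (hdu x hx)
  have hsPv : ∀ x ∈ E, strain (fun y => v y - piPelas E n q v y) x = strain v x - Mv := by
    intro x hx
    exact strain_sub_piP v (vavg n q v) qb (meanRot E v) Mv hMvsymm x (hdv x hx)
  -- Step A : the constant-strain energy
  have hA : aEelas E lam mu (piCelas E qb u) (piCelas E qb v)
      = V * ∑ i, ∑ j, hooke lam mu Mu i j * Mv i j := by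
    simp only [aEelas, hsCu, hsCv]
    rw [setIntegral_const, smul_eq_mul, measureReal_def, hVdef]
  -- Step B : the remainder energy as an integral
  have hB : aEelas E lam mu (fun x => u x - piPelas E n q u x)
        (fun x => v x - piPelas E n q v x)
      = ∫ x in E, ∑ i, ∑ j, hooke lam mu (strain u x - Mu) i j * (strain v x - Mv) i j := by
    simp only [aEelas]
    exact setIntegral_congr_fun hmeas fun x hx => by rw [hsPu x hx, hsPv x hx]
  -- pointwise algebraic identity
  have key : ∀ S T : Matrix (Fin 2) (Fin 2) ℝ,
      (∑ i, ∑ j, hooke lam mu (S - Mu) i j * (T - Mv) i j)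
      = (∑ i, ∑ j, hooke lam mu S i j * T i j)
        - ((∑ i, ∑ j, hooke lam mu S i j * Mv i j)
           + (∑ i, ∑ j, hooke lam mu Mu i j * T i j)
           - (∑ i, ∑ j, hooke lam mu Mu i j * Mv i j)) := by
    intro S T
    simp [hooke, Fin.sum_univ_two, Matrix.sub_apply, Matrix.add_apply, Matrix.smul_apply,
      smul_eq_mul, Matrix.trace_fin_two, Matrix.one_apply]
    ring
  -- hooke-entry decomposition for the first mixed term
  have e1 : ∀ (i j : Fin 2) (x : EuclideanSpace ℝ (Fin 2)),
      hooke lam mu (strain u x) i j * Mv i j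
      = (2 * mu * Mv i j) * strain u x i j
        + ((lam * (1 : Matrix (Fin 2) (Fin 2) ℝ) i j * Mv i j) * strain u x 0 0
           + (lam * (1 : Matrix (Fin 2) (Fin 2) ℝ) i j * Mv i j) * strain u x 1 1) := by
    intro i j x
    simp only [hooke, Matrix.add_apply, Matrix.smul_apply, smul_eq_mul, Matrix.trace_fin_two]
    ring
  have hIntTerm1 : ∀ i j : Fin 2,
      IntegrableOn (fun x => hooke lam mu (strain u x) i j * Mv i j) E volume := by
    intro i j
    refine (((hInt_u i j).const_mul (2 * mu * Mv i j)).add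
      (((hInt_u 0 0).const_mul (lam * (1 : Matrix (Fin 2) (Fin 2) ℝ) i j * Mv i j)).add
        ((hInt_u 1 1).const_mul (lam * (1 : Matrix (Fin 2) (Fin 2) ℝ) i j * Mv i j)))).congr
      (Filter.Eventually.of_forall fun x => (e1 i j x).symm)
  have hterm1 : ∀ i j : Fin 2, (∫ x in E, hooke lam mu (strain u x) i j * Mv i j)
      = V * (hooke lam mu Mu i j * Mv i j) := by
    intro i j
    have hA1 : IntegrableOn (fun x => 2 * mu * Mv i j * strain u x i j) E volume :=
      (hInt_u i j).const_mul _
    have hB1 : IntegrableOn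
        (fun x => lam * (1 : Matrix (Fin 2) (Fin 2) ℝ) i j * Mv i j * strain u x 0 0) E volume :=
      (hInt_u 0 0).const_mul _
    have hC1 : IntegrableOn
        (fun x => lam * (1 : Matrix (Fin 2) (Fin 2) ℝ) i j * Mv i j * strain u x 1 1) E volume :=
      (hInt_u 1 1).const_mul _
    have hBC : IntegrableOn
        (fun x => lam * (1 : Matrix (Fin 2) (Fin 2) ℝ) i j * Mv i j * strain u x 0 0
          + lam * (1 : Matrix (Fin 2) (Fin 2) ℝ) i j * Mv i j * strain u x 1 1) E volume :=
      hB1.add hC1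
    simp only [e1]
    rw [integral_add hA1 hBC, integral_add hB1 hC1,
      MeasureTheory.integral_const_mul, MeasureTheory.integral_const_mul,
      MeasureTheory.integral_const_mul, hIu i j, hIu 0 0, hIu 1 1]
    simp only [hooke, Matrix.add_apply, Matrix.smul_apply, smul_eq_mul, Matrix.trace_fin_two]
    ring
  have hIntTerm2 : ∀ i j : Fin 2,
      IntegrableOn (fun x => hooke lam mu Mu i j * strain v x i j) E volume :=
    fun i j => (hInt_v i j).const_mul _
  have hterm2 : ∀ i j : Fin 2, (∫ x in E, hooke lam mu Mu i j * strain v x i j)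
      = V * (hooke lam mu Mu i j * Mv i j) := by
    intro i j
    rw [MeasureTheory.integral_const_mul, hIv i j]; ring
  have hH1int : IntegrableOn
      (fun x => ∑ i, ∑ j, hooke lam mu (strain u x) i j * Mv i j) E volume :=
    integrable_finset_sum _ fun i _ => integrable_finset_sum _ fun j _ => hIntTerm1 i j
  have hH2int : IntegrableOn
      (fun x => ∑ i, ∑ j, hooke lam mu Mu i j * strain v x i j) E volume :=
    integrable_finset_sum _ fun i _ => integrable_finset_sum _ fun j _ => hIntTerm2 i j
  have hH1 : (∫ x in E, ∑ i, ∑ j, hooke lam mu (strain u x) i j * Mv i j)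
      = V * ∑ i, ∑ j, hooke lam mu Mu i j * Mv i j := by
    rw [integral_finset_sum _ fun i _ => integrable_finset_sum _ fun j _ => hIntTerm1 i j]
    have h2 : ∀ i : Fin 2, (∫ x in E, ∑ j, hooke lam mu (strain u x) i j * Mv i j)
        = ∑ j, V * (hooke lam mu Mu i j * Mv i j) := by
      intro i
      rw [integral_finset_sum _ fun j _ => hIntTerm1 i j]
      exact Finset.sum_congr rfl fun j _ => hterm1 i j
    rw [Finset.sum_congr rfl fun i _ => h2 i]
    simp only [Fin.sum_univ_two]
    ring
  have hH2 : (∫ x in E, ∑ i, ∑ j, hooke lam mu Mu i j * strain v x i j)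
      = V * ∑ i, ∑ j, hooke lam mu Mu i j * Mv i j := by
    rw [integral_finset_sum _ fun i _ => integrable_finset_sum _ fun j _ => hIntTerm2 i j]
    have h2 : ∀ i : Fin 2, (∫ x in E, ∑ j, hooke lam mu Mu i j * strain v x i j)
        = ∑ j, V * (hooke lam mu Mu i j * Mv i j) := by
      intro i
      rw [integral_finset_sum _ fun j _ => hIntTerm2 i j]
      exact Finset.sum_congr rfl fun j _ => hterm2 i j
    rw [Finset.sum_congr rfl fun i _ => h2 i]
    simp only [Fin.sum_univ_two]
    ring
  -- integrability of the full integrand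
  have hFc : ContinuousOn
      (fun x => ∑ i, ∑ j, hooke lam mu (strain u x) i j * strain v x i j) (closure E) := by
    apply continuousOn_finset_sum
    intro i _
    apply continuousOn_finset_sum
    intro j _
    have hrw : (fun x => hooke lam mu (strain u x) i j * strain v x i j)
        = fun x => (2 * mu * strain u x i j
            + lam * (strain u x 0 0 + strain u x 1 1) * (1 : Matrix (Fin 2) (Fin 2) ℝ) i j)
          * strain v x i j := by
      funext x
      simp only [hooke, Matrix.add_apply, Matrix.smul_apply, smul_eq_mul, Matrix.trace_fin_two]
    rw [hrw]
    exact ((continuousOn_const.mul (hcu i j)).add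
      ((continuousOn_const.mul ((hcu 0 0).add (hcu 1 1))).mul continuousOn_const)).mul (hcv i j)
  have hFint : IntegrableOn
      (fun x => ∑ i, ∑ j, hooke lam mu (strain u x) i j * strain v x i j) E volume :=
    hIntOn _ hFc
  have hCint : IntegrableOn
      (fun _ : EuclideanSpace ℝ (Fin 2) => ∑ i, ∑ j, hooke lam mu Mu i j * Mv i j) E volume :=
    integrableOn_const hfin.ne
  -- compute the remainder integral
  have hG : (∫ x in E, ∑ i, ∑ j, hooke lam mu (strain u x - Mu) i j * (strain v x - Mv) i j)
      = (∫ x in E, ∑ i, ∑ j, hooke lam mu (strain u x) i j * strain v x i j)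
        - V * ∑ i, ∑ j, hooke lam mu Mu i j * Mv i j := by
    have hHadd : IntegrableOn
        (fun x => (∑ i, ∑ j, hooke lam mu (strain u x) i j * Mv i j)
          + ∑ i, ∑ j, hooke lam mu Mu i j * strain v x i j) E volume := hH1int.add hH2int
    have hHsum : IntegrableOn
        (fun x => (∑ i, ∑ j, hooke lam mu (strain u x) i j * Mv i j)
          + (∑ i, ∑ j, hooke lam mu Mu i j * strain v x i j)
          - ∑ i, ∑ j, hooke lam mu Mu i j * Mv i j) E volume := hHadd.sub hCint
    simp only [key]
    rw [integral_sub hFint hHsum, integral_sub hHadd hCint, integral_add hH1int hH2int,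
      hH1, hH2, setIntegral_const, smul_eq_mul, measureReal_def, ← hVdef]
    ring
  rw [hA, hB, hG]
  simp only [aEelas]
  ring
end
end
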